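/- arXiv:1407.2800 — 12 statements merged into one kernel-verified Lean document; each statement's English description precedes it below -/
import Mathlib

section
/- Let a, b, c be real numbers such that the 3×3 matrix B = [[1,a,b],[a,1,c],[b,c,1]] is positive semidefinite. Let I be an order-connected subset (interval) of [0,∞) and let f : I → ℝ be a strictly decreasing function whose range is all of [−1,1], satisfying f(p+q) = f(p)·f(q) − √(1−f(p)²)·√(1−f(q)²) for all p, q with p, q, p+q ∈ I. Then for any permutation (x,y,z) of (a,b,c) and any p, q, r ∈ I with f(p) = x, f(q) = y, f(r) = z, one has p ≤ q + r. -/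
open Real

theorem stmt0 (a b c : ℝ)
    (hB : Matrix.PosSemidef !![1, a, b; a, 1, c; b, c, 1])
    (I : Set ℝ) (hI : I ⊆ Set.Ici 0) (hIconn : I.OrdConnected)
    (f : ℝ → ℝ) (hf : StrictAntiOn f I) (hrange : f '' I = Set.Icc (-1) 1)
    (hfe : ∀ p ∈ I, ∀ q ∈ I, p + q ∈ I →
      f (p + q) = f p * f q - Real.sqrt (1 - f p ^ 2) * Real.sqrt (1 - f q ^ 2))
    (x y z : ℝ) (hperm : [x, y, z].Perm [a, b, c])
    (p q r : ℝ) (hp : p ∈ I) (hq : q ∈ I) (hr : r ∈ I)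
    (hfp : f p = x) (hfq : f q = y) (hfr : f r = z) :
    p ≤ q + r := by
  by_contra h
  push_neg at h
  have h0r : (0:ℝ) ≤ r := hI hr
  have hqr : q + r ∈ I := hIconn.out hq hp ⟨le_add_of_nonneg_right h0r, h.le⟩
  have heq := hfe q hq r hr hqr
  have hlt : f p < f (q + r) := hf hqr hp h
  rw [heq, hfp, hfq, hfr] at hlt
  -- bounds on y, z, x
  have hy : y ∈ Set.Icc (-1:ℝ) 1 := by
    rw [← hfq, ← hrange]; exact Set.mem_image_of_mem f hq
  have hz : z ∈ Set.Icc (-1:ℝ) 1 := by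
    rw [← hfr, ← hrange]; exact Set.mem_image_of_mem f hr
  have hx : x ∈ Set.Icc (-1:ℝ) 1 := by
    rw [← hfp, ← hrange]; exact Set.mem_image_of_mem f hp
  -- det nonneg
  have hdet : (0:ℝ) ≤ (!![1, a, b; a, 1, c; b, c, 1]).det := by
    exact hB.det_nonneg
  simp [Matrix.det_fin_three] at hdet
  have hprod : x * y * z = a * b * c := by
    have := hperm.prod_eq; simpa [mul_assoc] using this
  have hsq : x ^ 2 + y ^ 2 + z ^ 2 = a ^ 2 + b ^ 2 + c ^ 2 := by
    have := (hperm.map (fun t => t ^ 2)).sum_eq; simpa [add_assoc] using this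
  have hdet' : 1 + 2 * (x * y * z) - (x ^ 2 + y ^ 2 + z ^ 2) ≥ 0 := by
    rw [hprod, hsq]; nlinarith [hdet]
  set s := Real.sqrt (1 - y ^ 2) with hs
  set t := Real.sqrt (1 - z ^ 2) with ht
  have hs0 : 0 ≤ s := Real.sqrt_nonneg _
  have ht0 : 0 ≤ t := Real.sqrt_nonneg _
  have hs2 : s ^ 2 = 1 - y ^ 2 := Real.sq_sqrt (by nlinarith [hy.1, hy.2])
  have ht2 : t ^ 2 = 1 - z ^ 2 := Real.sq_sqrt (by nlinarith [hz.1, hz.2])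
  nlinarith [sq_nonneg (x - y * z + s * t), mul_nonneg hs0 ht0, sq_nonneg (s*t), hdet',
    mul_nonneg (mul_nonneg hs0 ht0) (mul_nonneg hs0 ht0)]
end

section
/- Let V be a complex inner product space and define, for nonzero vectors u, v ∈ V, the angle θ(u,v) = arccos(|⟨u,v⟩|/(‖u‖·‖v‖)). Then for all nonzero vectors u, v, w ∈ V, the triangle inequality θ(u,v) ≤ θ(u,w) + θ(w,v) holds. -/
open Real

lemma arccos_tri {A B C : ℝ} (hA0 : 0 ≤ A) (hB0 : 0 ≤ B) (hB1 : B ≤ 1)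
    (hC0 : 0 ≤ C) (hC1 : C ≤ 1)
    (h : B * C - √(1 - B ^ 2) * √(1 - C ^ 2) ≤ A) :
    arccos A ≤ arccos B + arccos C := by
  set s := arccos B + arccos C with hs
  rcases le_or_gt (π / 2) s with h2 | h2
  · exact le_trans (Real.arccos_le_pi_div_two.mpr hA0) h2
  · have hs0 : 0 ≤ s := add_nonneg (arccos_nonneg _) (arccos_nonneg _)
    have hcs : Real.cos s = B * C - √(1 - B ^ 2) * √(1 - C ^ 2) := by
      rw [hs, Real.cos_add, Real.cos_arccos (by linarith) hB1,
        Real.cos_arccos (by linarith) hC1, Real.sin_arccos, Real.sin_arccos]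
    have : arccos A ≤ arccos (Real.cos s) := by
      unfold Real.arccos
      have := Real.monotone_arcsin (hcs ▸ h)
      linarith
    rwa [Real.arccos_cos hs0 (by linarith [Real.pi_pos])] at this

lemma key_ineq {V : Type*} [NormedAddCommGroup V] [InnerProductSpace ℂ V]
    (u v w : V) (hu : ‖u‖ = 1) (hv : ‖v‖ = 1) (hw : ‖w‖ = 1) :
    ‖(inner ℂ u w : ℂ)‖ * ‖(inner ℂ w v : ℂ)‖ -
      √(1 - ‖(inner ℂ u w : ℂ)‖ ^ 2) * √(1 - ‖(inner ℂ w v : ℂ)‖ ^ 2)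
      ≤ ‖(inner ℂ u v : ℂ)‖ := by
  set a : ℂ := inner ℂ w u with ha
  set b : ℂ := inner ℂ w v with hb
  have hww : (inner ℂ w w : ℂ) = 1 := by
    rw [inner_self_eq_norm_sq_to_K, hw]; norm_num
  set u' := u - a • w with hu'
  set v' := v - b • w with hv'
  have hwu' : (inner ℂ w u' : ℂ) = 0 := by
    simp [hu', inner_sub_right, inner_smul_right, hww, ha, hw]
  have hwv' : (inner ℂ w v' : ℂ) = 0 := by
    simp [hv', inner_sub_right, inner_smul_right, hww, hb, hw]
  have hdecomp : (starRingEnd ℂ) a * b = (inner ℂ u v : ℂ) - inner ℂ u' v' := by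
    have : (inner ℂ u' v' : ℂ) = inner ℂ u v - b * inner ℂ u w - (starRingEnd ℂ) a * inner ℂ w v
        + (starRingEnd ℂ) a * b * inner ℂ w w := by
      simp [hu', hv', inner_sub_left, inner_sub_right, inner_smul_left, inner_smul_right]
      ring
    have huw : (inner ℂ u w : ℂ) = (starRingEnd ℂ) a := by rw [ha, ← inner_conj_symm]
    rw [this, huw, hww, hb]; ring
  have hnu' : ‖u'‖ ^ 2 = 1 - ‖a‖ ^ 2 := by
    have horth : (inner ℂ u' (a • w) : ℂ) = 0 := by
      rw [inner_smul_right, ← inner_conj_symm, hwu']; simp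
    have := norm_add_sq_eq_norm_sq_add_norm_sq_of_inner_eq_zero u' (a • w) horth
    have hsum : u' + a • w = u := by rw [hu']; abel
    rw [hsum, hu, norm_smul, hw] at this
    nlinarith
  have hnv' : ‖v'‖ ^ 2 = 1 - ‖b‖ ^ 2 := by
    have horth : (inner ℂ v' (b • w) : ℂ) = 0 := by
      rw [inner_smul_right, ← inner_conj_symm, hwv']; simp
    have := norm_add_sq_eq_norm_sq_add_norm_sq_of_inner_eq_zero v' (b • w) horth
    have hsum : v' + b • w = v := by rw [hv']; abel
    rw [hsum, hv, norm_smul, hw] at this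
    nlinarith
  have hnu'' : ‖u'‖ = √(1 - ‖a‖ ^ 2) := by
    rw [← hnu', Real.sqrt_sq (norm_nonneg _)]
  have hnv'' : ‖v'‖ = √(1 - ‖b‖ ^ 2) := by
    rw [← hnv', Real.sqrt_sq (norm_nonneg _)]
  have hcs : ‖(inner ℂ u' v' : ℂ)‖ ≤ ‖u'‖ * ‖v'‖ := by
    simpa using norm_inner_le_norm (𝕜 := ℂ) u' v'
  have habs : ‖a‖ * ‖b‖ ≤
      ‖(inner ℂ u v : ℂ)‖ + ‖(inner ℂ u' v' : ℂ)‖ := by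
    calc ‖a‖ * ‖b‖ = ‖((starRingEnd ℂ) a * b)‖ := by
          rw [norm_mul, Complex.norm_conj]
      _ = ‖((inner ℂ u v : ℂ) - inner ℂ u' v')‖ := by rw [hdecomp]
      _ ≤ _ := by simpa using norm_sub_le (inner ℂ u v : ℂ) (inner ℂ u' v' : ℂ)
  have huwa : ‖(inner ℂ u w : ℂ)‖ = ‖a‖ := by
    rw [ha, ← inner_conj_symm u w, Complex.norm_conj]
  rw [hnu'', hnv''] at hcs
  rw [huwa]
  linarith

lemma abs_inner_normalize {V : Type*} [NormedAddCommGroup V] [InnerProductSpace ℂ V]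
    (u v : V) :
    ‖(inner ℂ (((‖u‖ : ℂ))⁻¹ • u) (((‖v‖ : ℂ))⁻¹ • v) : ℂ)‖ =
      ‖(inner ℂ u v : ℂ)‖ / (‖u‖ * ‖v‖) := by
  rw [inner_smul_left, inner_smul_right, norm_mul, norm_mul, map_inv₀, Complex.conj_ofReal]
  simp [map_inv₀, Complex.norm_real, abs_of_nonneg (norm_nonneg _)]
  ring

lemma norm_normalize {V : Type*} [NormedAddCommGroup V] [InnerProductSpace ℂ V]
    (u : V) (hu : u ≠ 0) : ‖((‖u‖ : ℂ))⁻¹ • u‖ = 1 := by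
  have h : ‖u‖ ≠ 0 := norm_ne_zero_iff.mpr hu
  rw [norm_smul, norm_inv, Complex.norm_real, norm_norm]
  field_simp

theorem stmt2 {V : Type*} [NormedAddCommGroup V] [InnerProductSpace ℂ V]
    (u v w : V) (hu : u ≠ 0) (hv : v ≠ 0) (hw : w ≠ 0) :
    Real.arccos (‖(inner ℂ u v : ℂ)‖ / (‖u‖ * ‖v‖)) ≤
      Real.arccos (‖(inner ℂ u w : ℂ)‖ / (‖u‖ * ‖w‖)) +
      Real.arccos (‖(inner ℂ w v : ℂ)‖ / (‖w‖ * ‖v‖)) := by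
  set u₀ := ((‖u‖ : ℂ))⁻¹ • u with hu₀
  set v₀ := ((‖v‖ : ℂ))⁻¹ • v with hv₀
  set w₀ := ((‖w‖ : ℂ))⁻¹ • w with hw₀
  have hnu : ‖u₀‖ = 1 := norm_normalize u hu
  have hnv : ‖v₀‖ = 1 := norm_normalize v hv
  have hnw : ‖w₀‖ = 1 := norm_normalize w hw
  have e1 : ‖(inner ℂ u₀ v₀ : ℂ)‖ = ‖(inner ℂ u v : ℂ)‖ / (‖u‖ * ‖v‖) :=
    abs_inner_normalize u v
  have e2 : ‖(inner ℂ u₀ w₀ : ℂ)‖ = ‖(inner ℂ u w : ℂ)‖ / (‖u‖ * ‖w‖) :=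
    abs_inner_normalize u w
  have e3 : ‖(inner ℂ w₀ v₀ : ℂ)‖ = ‖(inner ℂ w v : ℂ)‖ / (‖w‖ * ‖v‖) :=
    abs_inner_normalize w v
  rw [← e1, ← e2, ← e3]
  have key := key_ineq u₀ v₀ w₀ hnu hnv hnw
  have cs1 : ‖(inner ℂ u₀ w₀ : ℂ)‖ ≤ 1 := by
    have := norm_inner_le_norm (𝕜 := ℂ) u₀ w₀
    rw [hnu, hnw] at this; simpa using this
  have cs2 : ‖(inner ℂ w₀ v₀ : ℂ)‖ ≤ 1 := by
    have := norm_inner_le_norm (𝕜 := ℂ) w₀ v₀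
    rw [hnw, hnv] at this; simpa using this
  exact arccos_tri (by positivity) (by positivity) cs1 (by positivity) cs2 key
end

section
/- Let a, b, c be real numbers with 0 ≤ a, b, c ≤ 1, and set α = arccos a, β = arccos b, γ = arccos c. Then the three inequalities α ≤ β + γ, β ≤ γ + α, and γ ≤ α + β all hold if and only if the 3×3 matrix B = [[1,a,b],[a,1,c],[b,c,1]] is positive semidefinite. -/
open Real Matrix

private lemma aux_arccos_le (a b c : ℝ) (ha0 : 0 ≤ a) (ha1 : a ≤ 1)
    (hb0 : 0 ≤ b) (hb1 : b ≤ 1) (hc0 : 0 ≤ c) (hc1 : c ≤ 1)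
    (hdet : a^2 + b^2 + c^2 ≤ 1 + 2*a*b*c) :
    Real.arccos a ≤ Real.arccos b + Real.arccos c := by
  have hb2 : (0:ℝ) ≤ 1 - b^2 := by nlinarith
  have hc2 : (0:ℝ) ≤ 1 - c^2 := by nlinarith
  have hS : (b*c - a)^2 ≤ (1-b^2)*(1-c^2) := by nlinarith
  have h1 : b*c - a ≤ √(1-b^2) * √(1-c^2) := by
    have h2 := Real.sqrt_le_sqrt hS
    rw [Real.sqrt_mul hb2, Real.sqrt_sq_eq_abs] at h2
    calc b*c - a ≤ |b*c - a| := le_abs_self _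
    _ ≤ _ := h2
  have hsum_le : Real.arccos b + Real.arccos c ≤ π := by
    have h3 := Real.arccos_le_pi_div_two.mpr hb0
    have h4 := Real.arccos_le_pi_div_two.mpr hc0
    linarith
  have hcos : Real.cos (Real.arccos b + Real.arccos c) ≤ a := by
    rw [Real.cos_add, Real.cos_arccos (by linarith) hb1, Real.cos_arccos (by linarith) hc1,
      Real.sin_arccos, Real.sin_arccos]
    linarith
  by_contra h
  push_neg at h
  have h5 := Real.cos_lt_cos_of_nonneg_of_le_pi
    (add_nonneg (Real.arccos_nonneg b) (Real.arccos_nonneg c)) (Real.arccos_le_pi a) h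
  rw [Real.cos_arccos (by linarith) ha1] at h5
  linarith

private lemma aux_det_nonneg (a b c : ℝ) (ha0 : 0 ≤ a) (ha1 : a ≤ 1)
    (hb0 : 0 ≤ b) (hb1 : b ≤ 1) (hc0 : 0 ≤ c) (hc1 : c ≤ 1)
    (h1 : Real.arccos a ≤ Real.arccos b + Real.arccos c)
    (h2 : Real.arccos b ≤ Real.arccos c + Real.arccos a)
    (h3 : Real.arccos c ≤ Real.arccos a + Real.arccos b) :
    a^2 + b^2 + c^2 ≤ 1 + 2*a*b*c := by
  set α := Real.arccos a with hα
  set β := Real.arccos b with hβ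
  set γ := Real.arccos c with hγ
  have hα0 : 0 ≤ α := Real.arccos_nonneg a
  have hαπ : α ≤ π := Real.arccos_le_pi a
  have hβ2 : β ≤ π/2 := Real.arccos_le_pi_div_two.mpr hb0
  have hγ2 : γ ≤ π/2 := Real.arccos_le_pi_div_two.mpr hc0
  have hca : Real.cos α = a := Real.cos_arccos (by linarith) ha1
  have hcb : Real.cos β = b := Real.cos_arccos (by linarith) hb1
  have hcc : Real.cos γ = c := Real.cos_arccos (by linarith) hc1
  -- lower bound : cos(β+γ) ≤ a
  have hlo : Real.cos (β + γ) ≤ a := by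
    rcases eq_or_lt_of_le h1 with h | h
    · rw [← h, hca]
    · have := Real.cos_lt_cos_of_nonneg_of_le_pi hα0 (by linarith) h
      linarith [hca ▸ this]
  -- upper bound : a ≤ cos (β - γ)
  have hhi : a ≤ Real.cos (β - γ) := by
    rcases le_total γ β with hbg | hbg
    · rcases eq_or_lt_of_le (by linarith : β - γ ≤ α) with h | h
      · rw [h, hca]
      · have := Real.cos_lt_cos_of_nonneg_of_le_pi (by linarith : 0 ≤ β - γ) hαπ h
        linarith [hca ▸ this]
    · rw [show β - γ = -(γ - β) by ring, Real.cos_neg]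
      rcases eq_or_lt_of_le (by linarith : γ - β ≤ α) with h | h
      · rw [h, hca]
      · have := Real.cos_lt_cos_of_nonneg_of_le_pi (by linarith : 0 ≤ γ - β) hαπ h
        linarith [hca ▸ this]
  rw [Real.cos_add, hcb, hcc] at hlo
  rw [Real.cos_sub, hcb, hcc] at hhi
  have hsb : Real.sin β = √(1-b^2) := by rw [hβ]; exact Real.sin_arccos b
  have hsc : Real.sin γ = √(1-c^2) := by rw [hγ]; exact Real.sin_arccos c
  rw [hsb, hsc] at hlo hhi
  have hb2 : (0:ℝ) ≤ 1 - b^2 := by nlinarith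
  have hc2 : (0:ℝ) ≤ 1 - c^2 := by nlinarith
  have e1 : √(1-b^2)^2 = 1 - b^2 := Real.sq_sqrt hb2
  have e2 : √(1-c^2)^2 = 1 - c^2 := Real.sq_sqrt hc2
  have hSnn : 0 ≤ √(1-b^2) * √(1-c^2) := by positivity
  nlinarith [sq_nonneg (a - b*c), sq_nonneg (√(1-b^2) * √(1-c^2))]

theorem stmt3 (a b c : ℝ) (ha : a ∈ Set.Icc (0:ℝ) 1) (hb : b ∈ Set.Icc (0:ℝ) 1)
    (hc : c ∈ Set.Icc (0:ℝ) 1) :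
    (Real.arccos a ≤ Real.arccos b + Real.arccos c ∧
     Real.arccos b ≤ Real.arccos c + Real.arccos a ∧
     Real.arccos c ≤ Real.arccos a + Real.arccos b) ↔
    Matrix.PosSemidef !![1, a, b; a, 1, c; b, c, 1] := by
  obtain ⟨ha0, ha1⟩ := ha
  obtain ⟨hb0, hb1⟩ := hb
  obtain ⟨hc0, hc1⟩ := hc
  constructor
  · rintro ⟨h1, h2, h3⟩
    have hdet : a^2 + b^2 + c^2 ≤ 1 + 2*a*b*c :=
      aux_det_nonneg a b c ha0 ha1 hb0 hb1 hc0 hc1 h1 h2 h3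
    rw [Matrix.posSemidef_iff_dotProduct_mulVec]
    constructor
    · unfold Matrix.IsHermitian
      ext i j
      fin_cases i <;> fin_cases j <;> simp
    · intro x
      have hq : star x ⬝ᵥ ((!![1, a, b; a, 1, c; b, c, 1]) *ᵥ x)
          = x 0 * (x 0 + a * x 1 + b * x 2) + x 1 * (a * x 0 + x 1 + c * x 2)
            + x 2 * (b * x 0 + c * x 1 + x 2) := by
        simp [dotProduct, Matrix.mulVec, Fin.sum_univ_three]
      rw [hq]
      rcases lt_or_eq_of_le ha1 with hlt | heq
      · nlinarith [sq_nonneg (x 0 + a * x 1 + b * x 2),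
          sq_nonneg ((1-a^2) * x 1 + (c - a*b) * x 2),
          mul_nonneg (by nlinarith : (0:ℝ) ≤ 1 + 2*a*b*c - a^2 - b^2 - c^2) (sq_nonneg (x 2)),
          mul_pos (by linarith : (0:ℝ) < 1 - a) (by linarith : (0:ℝ) < 1 + a)]
      · subst heq
        have hbc : b = c := by nlinarith [sq_nonneg (b - c)]
        subst hbc
        nlinarith [sq_nonneg (x 0 + x 1 + b * x 2),
          mul_nonneg (by nlinarith : (0:ℝ) ≤ 1 - b^2) (sq_nonneg (x 2))]
  · intro hpsd
    have hdet0 : 0 ≤ Matrix.det !![1, a, b; a, 1, c; b, c, 1] := by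
      rw [hpsd.1.det_eq_prod_eigenvalues]
      apply Finset.prod_nonneg
      intro i _
      exact_mod_cast hpsd.eigenvalues_nonneg i
    have hdetval : Matrix.det !![1, a, b; a, 1, c; b, c, 1]
        = 1 + 2*a*b*c - a^2 - b^2 - c^2 := by
      simp [Matrix.det_fin_three]; ring
    rw [hdetval] at hdet0
    have hdet : a^2 + b^2 + c^2 ≤ 1 + 2*a*b*c := by linarith
    refine ⟨aux_arccos_le a b c ha0 ha1 hb0 hb1 hc0 hc1 hdet,
      aux_arccos_le b c a hb0 hb1 hc0 hc1 ha0 ha1 (by nlinarith),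
      aux_arccos_le c a b hc0 hc1 ha0 ha1 hb0 hb1 (by nlinarith)⟩
end

section
/- Let H_1, …, H_n be n×n complex matrices such that each G_i = H_iᴴH_i is a density matrix, i.e., tr(H_iᴴH_i) = 1 for every i. Then for all indices i < j < q: | |tr(H_iᴴH_j)| − |tr(H_iᴴH_q)| | ≤ √(1 − |tr(H_jᴴH_q)|²) ≤ √2 · √(1 − |tr(H_jᴴH_q)|), and for every real number k ≥ 2, | |tr(H_iᴴH_j)|^k − |tr(H_iᴴH_q)|^k | ≤ √(1 − |tr(H_jᴴH_q)|^k). -/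
open Real ComplexOrder Matrix

local notation "⟪" x ", " y "⟫" => @inner ℂ _ _ x y

private lemma arccos_anti' {a b : ℝ} (h : a ≤ b) : Real.arccos b ≤ Real.arccos a := by
  simp only [Real.arccos]
  have := Real.monotone_arcsin h
  linarith

/-- Bernoulli consequence: for `0 < t ≤ 1`, `1 ≤ p`, `p * t^(p-1) * (1-t) ≤ 1 - t^p`. -/
private lemma bern' {t p : ℝ} (ht0 : 0 < t) (ht1 : t ≤ 1) (hp : 1 ≤ p) :
    p * t ^ (p - 1) * (1 - t) ≤ 1 - t ^ p := by
  have hs : (-1 : ℝ) ≤ (1 - t) / t := by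
    have : (0:ℝ) ≤ (1 - t) / t := div_nonneg (by linarith) ht0.le
    linarith
  have hB := one_add_mul_self_le_rpow_one_add hs hp
  have h1 : 1 + (1 - t) / t = 1 / t := by field_simp; ring
  rw [h1] at hB
  have htp : (0:ℝ) < t ^ p := Real.rpow_pos_of_pos ht0 p
  have h2 : (1 / t : ℝ) ^ p * t ^ p = 1 := by
    rw [← Real.mul_rpow (by positivity) ht0.le, one_div_mul_cancel ht0.ne', Real.one_rpow]
  have h3 : t ^ (p - 1) = t ^ p / t := by
    rw [Real.rpow_sub ht0, Real.rpow_one]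
  have h4 := mul_le_mul_of_nonneg_right hB htp.le
  rw [h2] at h4
  have h5 : (1 + p * ((1 - t) / t)) * t ^ p = t ^ p + p * t ^ (p - 1) * (1 - t) := by
    rw [h3]; field_simp
  rw [h5] at h4
  linarith

private lemma convub' {p α β : ℝ} (hp : 1 ≤ p) (hβ : 0 < β) (hβα : β ≤ α) :
    α ^ p - β ^ p ≤ p * α ^ (p - 1) * (α - β) := by
  have hα : 0 < α := lt_of_lt_of_le hβ hβα
  have hs : (-1 : ℝ) ≤ β / α - 1 := by
    have : (0:ℝ) ≤ β / α := div_nonneg hβ.le hα.le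
    linarith
  have hB := one_add_mul_self_le_rpow_one_add hs hp
  have h1 : 1 + (β / α - 1) = β / α := by ring
  rw [h1] at hB
  have hap : (0:ℝ) < α ^ p := Real.rpow_pos_of_pos hα p
  have h2 : (β / α : ℝ) ^ p = β ^ p / α ^ p := Real.div_rpow hβ.le hα.le p
  rw [h2] at hB
  have h4 := mul_le_mul_of_nonneg_right hB hap.le
  rw [div_mul_cancel₀ _ hap.ne'] at h4
  have h3 : α ^ (p - 1) = α ^ p / α := by
    rw [Real.rpow_sub hα, Real.rpow_one]
  have h5 : (1 + p * (β / α - 1)) * α ^ p = α ^ p - p * α ^ (p - 1) * (α - β) := by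
    rw [h3]; field_simp; ring
  rw [h5] at h4
  linarith

private lemma keyineq' {p u v : ℝ} (hp : 1 ≤ p) (hu0 : 0 < u) (hu1 : u ≤ 1)
    (hv0 : 0 < v) (hv1 : v ≤ 1)
    (hw : 0 < u * v - Real.sqrt (1 - u ^ 2) * Real.sqrt (1 - v ^ 2)) :
    u ^ p * v ^ p - (u * v - Real.sqrt (1 - u ^ 2) * Real.sqrt (1 - v ^ 2)) ^ p ≤
      Real.sqrt (1 - (u ^ p) ^ 2) * Real.sqrt (1 - (v ^ p) ^ 2) := by
  set s := Real.sqrt (1 - u ^ 2) with hsdef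
  set s' := Real.sqrt (1 - v ^ 2) with hs'def
  have hs0 : 0 ≤ s := Real.sqrt_nonneg _
  have hs'0 : 0 ≤ s' := Real.sqrt_nonneg _
  have hssq : s ^ 2 = 1 - u ^ 2 := Real.sq_sqrt (by nlinarith)
  have hs'sq : s' ^ 2 = 1 - v ^ 2 := Real.sq_sqrt (by nlinarith)
  have huv : 0 < u * v := mul_pos hu0 hv0
  have hstep1 : (u * v) ^ p - (u * v - s * s') ^ p ≤ p * (u * v) ^ (p - 1) * (s * s') := by
    have := convub' hp hw (by nlinarith : u * v - s * s' ≤ u * v)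
    have hss' : u * v - (u * v - s * s') = s * s' := by ring
    calc (u * v) ^ p - (u * v - s * s') ^ p
        ≤ p * (u * v) ^ (p - 1) * (u * v - (u * v - s * s')) := this
      _ = p * (u * v) ^ (p - 1) * (s * s') := by rw [hss']
  have hone : ∀ {w : ℝ}, 0 < w → w ≤ 1 →
      p * (w ^ 2) ^ (p - 1) * (1 - w ^ 2) ≤ 1 - (w ^ p) ^ 2 := by
    intro w hw0 hw1
    have h1 : (0:ℝ) < w ^ 2 := by positivity
    have h2 : w ^ 2 ≤ 1 := by nlinarith
    have h := bern' h1 h2 hp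
    have h3 : (w ^ 2 : ℝ) ^ p = (w ^ p) ^ 2 := by
      rw [← Real.rpow_natCast w 2, ← Real.rpow_mul hw0.le, mul_comm,
        Real.rpow_mul hw0.le, Real.rpow_natCast]
    rw [h3] at h
    exact h
  have hu' := hone hu0 hu1
  have hv' := hone hv0 hv1
  have hmul : (u * v) ^ (p - 1) = u ^ (p - 1) * v ^ (p - 1) :=
    Real.mul_rpow hu0.le hv0.le
  set L := p * (u * v) ^ (p - 1) * (s * s') with hLdef
  have hL0 : 0 ≤ L := by
    have h1 : (0:ℝ) ≤ (u * v) ^ (p - 1) := Real.rpow_nonneg huv.le _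
    have hp0 : (0:ℝ) ≤ p := by linarith
    positivity
  have hLsq : L ^ 2 =
      (p * (u ^ 2) ^ (p - 1) * (1 - u ^ 2)) * (p * (v ^ 2) ^ (p - 1) * (1 - v ^ 2)) := by
    have e1 : ((u:ℝ) ^ 2) ^ (p - 1) = (u ^ (p - 1)) ^ 2 := by
      rw [← Real.rpow_natCast u 2, ← Real.rpow_mul hu0.le, mul_comm,
        Real.rpow_mul hu0.le, Real.rpow_natCast]
    have e2 : ((v:ℝ) ^ 2) ^ (p - 1) = (v ^ (p - 1)) ^ 2 := by
      rw [← Real.rpow_natCast v 2, ← Real.rpow_mul hv0.le, mul_comm,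
        Real.rpow_mul hv0.le, Real.rpow_natCast]
    rw [hLdef, hmul, e1, e2, ← hssq, ← hs'sq]; ring
  have hR1 : (0:ℝ) ≤ 1 - (u ^ p) ^ 2 := by
    have h1 : u ^ p ≤ 1 := Real.rpow_le_one hu0.le hu1 (by linarith)
    have h2 : (u ^ p) ^ 2 ≤ 1 := by nlinarith [Real.rpow_nonneg hu0.le p]
    linarith
  have hR2 : (0:ℝ) ≤ 1 - (v ^ p) ^ 2 := by
    have h1 : v ^ p ≤ 1 := Real.rpow_le_one hv0.le hv1 (by linarith)
    have h2 : (v ^ p) ^ 2 ≤ 1 := by nlinarith [Real.rpow_nonneg hv0.le p]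
    linarith
  have hLR : L ^ 2 ≤ (1 - (u ^ p) ^ 2) * (1 - (v ^ p) ^ 2) := by
    rw [hLsq]
    apply mul_le_mul hu' hv' _ hR1
    have hpv : (0:ℝ) ≤ (v ^ 2) ^ (p - 1) := Real.rpow_nonneg (by positivity) _
    have hp0 : (0:ℝ) ≤ p := by linarith
    have h1 : (0:ℝ) ≤ 1 - v ^ 2 := by nlinarith
    positivity
  have hLfin : L ≤ Real.sqrt (1 - (u ^ p) ^ 2) * Real.sqrt (1 - (v ^ p) ^ 2) := by
    have h := Real.sqrt_le_sqrt hLR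
    rw [Real.sqrt_sq hL0, Real.sqrt_mul hR1] at h
    exact h
  have hfin : u ^ p * v ^ p = (u * v) ^ p := (Real.mul_rpow hu0.le hv0.le).symm
  rw [hfin]
  exact le_trans hstep1 hLfin

private lemma keyk' {k a b c : ℝ} (hk : 2 ≤ k)
    (ha0 : 0 ≤ a) (ha1 : a ≤ 1) (hb0 : 0 ≤ b) (hb1 : b ≤ 1) (hc0 : 0 ≤ c) (hc1 : c ≤ 1)
    (htri : Real.arccos b ≤ Real.arccos a + Real.arccos c) :
    a ^ k - b ^ k ≤ Real.sqrt (1 - c ^ k) := by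
  have hk0 : (0:ℝ) < k := by linarith
  have hbk0 : 0 ≤ b ^ k := Real.rpow_nonneg hb0 k
  have hck1 : c ^ k ≤ 1 := Real.rpow_le_one hc0 hc1 hk0.le
  have hck0 : 0 ≤ c ^ k := Real.rpow_nonneg hc0 k
  rcases eq_or_lt_of_le ha0 with ha0' | ha0'
  · rw [← ha0', Real.zero_rpow hk0.ne']
    have := Real.sqrt_nonneg (1 - c ^ k)
    linarith
  rcases eq_or_lt_of_le hc0 with hc0' | hc0'
  · rw [← hc0', Real.zero_rpow hk0.ne', sub_zero, Real.sqrt_one]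
    have : a ^ k ≤ 1 := Real.rpow_le_one ha0 ha1 hk0.le
    linarith
  set p := k / 2 with hpdef
  have hp : 1 ≤ p := by rw [hpdef]; linarith
  have hp0 : (0:ℝ) ≤ p := by linarith
  have hap1 : a ^ p ≤ 1 := Real.rpow_le_one ha0 ha1 hp0
  have hap0 : 0 ≤ a ^ p := Real.rpow_nonneg ha0 p
  have hbp1 : b ^ p ≤ 1 := Real.rpow_le_one hb0 hb1 hp0
  have hbp0 : 0 ≤ b ^ p := Real.rpow_nonneg hb0 p
  have hcp1 : c ^ p ≤ 1 := Real.rpow_le_one hc0 hc1 hp0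
  have hcp0 : 0 ≤ c ^ p := Real.rpow_nonneg hc0 p
  set X := Real.arccos (a ^ p) with hXdef
  set Y := Real.arccos (b ^ p) with hYdef
  set Z := Real.arccos (c ^ p) with hZdef
  have hcX : Real.cos X = a ^ p := Real.cos_arccos (by linarith) hap1
  have hcY : Real.cos Y = b ^ p := Real.cos_arccos (by linarith) hbp1
  have hcZ : Real.cos Z = c ^ p := Real.cos_arccos (by linarith) hcp1
  have hX0 : 0 ≤ X := Real.arccos_nonneg _
  have hY0 : 0 ≤ Y := Real.arccos_nonneg _
  have hZ0 : 0 ≤ Z := Real.arccos_nonneg _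
  have hX2 : X ≤ π / 2 := Real.arccos_le_pi_div_two.2 hap0
  have hY2 : Y ≤ π / 2 := Real.arccos_le_pi_div_two.2 hbp0
  have hZ2 : Z ≤ π / 2 := Real.arccos_le_pi_div_two.2 hcp0
  have sq_of : ∀ {w : ℝ}, 0 ≤ w → w ^ k = (w ^ p) ^ 2 := by
    intro w hw
    rw [← Real.rpow_natCast (w ^ p) 2, ← Real.rpow_mul hw]
    norm_num [hpdef]
  have hak : a ^ k = (a ^ p) ^ 2 := sq_of ha0
  have hbk : b ^ k = (b ^ p) ^ 2 := sq_of hb0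
  have hck : c ^ k = (c ^ p) ^ 2 := sq_of hc0
  have hsZ : Real.sqrt (1 - c ^ k) = Real.sin Z := by
    rw [hck, hZdef, Real.sin_arccos]
  rw [hak, hbk, hsZ, ← hcX, ← hcY]
  have hsinZ0 : 0 ≤ Real.sin Z :=
    Real.sin_nonneg_of_nonneg_of_le_pi hZ0 (by linarith [Real.pi_pos])
  by_cases hXZ : π / 2 ≤ X + Z
  · have h1 : Real.cos X ≤ Real.cos (π / 2 - Z) := by
      apply Real.cos_le_cos_of_nonneg_of_le_pi (by linarith) (by linarith [Real.pi_pos])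
        (by linarith)
    rw [Real.cos_pi_div_two_sub] at h1
    have hcX0 : 0 ≤ Real.cos X := by rw [hcX]; exact hap0
    have hcX1 : Real.cos X ≤ 1 := Real.cos_le_one X
    nlinarith [sq_nonneg (Real.cos Y)]
  push_neg at hXZ
  have hxX : Real.arccos a ≤ X := by
    apply arccos_anti'
    nth_rewrite 2 [← Real.rpow_one a]
    exact Real.rpow_le_rpow_of_exponent_ge ha0' ha1 hp
  have hzZ : Real.arccos c ≤ Z := by
    apply arccos_anti'
    nth_rewrite 2 [← Real.rpow_one c]
    exact Real.rpow_le_rpow_of_exponent_ge hc0' hc1 hp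
  set x := Real.arccos a with hxdef
  set z := Real.arccos c with hzdef
  have hx0 : 0 ≤ x := Real.arccos_nonneg _
  have hz0 : 0 ≤ z := Real.arccos_nonneg _
  have hxz2 : x + z < π / 2 := by linarith
  have hcx : Real.cos x = a := Real.cos_arccos (by linarith) ha1
  have hcz : Real.cos z = c := Real.cos_arccos (by linarith) hc1
  have hsx : Real.sin x = Real.sqrt (1 - a ^ 2) := Real.sin_arccos a
  have hsz : Real.sin z = Real.sqrt (1 - c ^ 2) := Real.sin_arccos c
  have hcosxz : Real.cos (x + z) = a * c - Real.sqrt (1 - a ^ 2) * Real.sqrt (1 - c ^ 2) := by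
    rw [Real.cos_add, hcx, hcz, hsx, hsz]
  have hcosxz0 : 0 < Real.cos (x + z) := by
    apply Real.cos_pos_of_mem_Ioo
    constructor <;> [linarith [Real.pi_pos]; exact hxz2]
  have hbxz : Real.cos (x + z) ≤ b := by
    have h1 : Real.cos (x + z) ≤ Real.cos (Real.arccos b) := by
      apply Real.cos_le_cos_of_nonneg_of_le_pi (Real.arccos_nonneg b)
        (by linarith [Real.pi_pos]) htri
    rwa [Real.cos_arccos (by linarith) hb1] at h1
  have hKI := keyineq' hp ha0' ha1 hc0' hc1 (by rw [← hcosxz]; exact hcosxz0)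
  have hsinX : Real.sin X = Real.sqrt (1 - (a ^ p) ^ 2) := Real.sin_arccos _
  have hsinZ : Real.sin Z = Real.sqrt (1 - (c ^ p) ^ 2) := Real.sin_arccos _
  have hcXZ : Real.cos (X + Z) ≤ Real.cos (x + z) ^ p := by
    rw [Real.cos_add, hcX, hcZ, hsinX, hsinZ, hcosxz]
    linarith
  have hbpXZ : Real.cos (X + Z) ≤ b ^ p := by
    calc Real.cos (X + Z) ≤ Real.cos (x + z) ^ p := hcXZ
      _ ≤ b ^ p := Real.rpow_le_rpow hcosxz0.le hbxz hp0
  have hYXZ : Y ≤ X + Z := by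
    have h1 := arccos_anti' hbpXZ
    rwa [Real.arccos_cos (by linarith) (by linarith [Real.pi_pos])] at h1
  by_cases hXY : X ≤ Y
  · have hid : Real.cos X ^ 2 - Real.cos Y ^ 2 = Real.sin (X + Y) * Real.sin (Y - X) := by
      rw [Real.sin_add, Real.sin_sub]
      linear_combination Real.cos Y ^ 2 * Real.sin_sq_add_cos_sq X -
        Real.cos X ^ 2 * Real.sin_sq_add_cos_sq Y
    rw [hid]
    have h1 : Real.sin (Y - X) ≤ Real.sin Z :=
      Real.sin_le_sin_of_le_of_le_pi_div_two (by linarith) hZ2 (by linarith)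
    have h2 : 0 ≤ Real.sin (Y - X) :=
      Real.sin_nonneg_of_nonneg_of_le_pi (by linarith) (by linarith [Real.pi_pos])
    have h3 : Real.sin (X + Y) ≤ 1 := Real.sin_le_one _
    have h4 : Real.sin (X + Y) * Real.sin (Y - X) ≤ Real.sin (Y - X) :=
      mul_le_of_le_one_left h2 h3
    linarith
  · push_neg at hXY
    have h1 : Real.cos X ≤ Real.cos Y :=
      Real.cos_le_cos_of_nonneg_of_le_pi hY0 (by linarith [Real.pi_pos]) hXY.le
    have h2 : 0 ≤ Real.cos X := by rw [hcX]; exact hap0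
    have h3 : Real.cos X ^ 2 ≤ Real.cos Y ^ 2 := pow_le_pow_left₀ h2 h1 2
    linarith [hsinZ0]

/-- triangle inequality for arccos of overlaps -/
private lemma tri_angle' {a b c : ℝ} (ha0 : 0 ≤ a) (ha1 : a ≤ 1) (hb0 : 0 ≤ b) (hb1 : b ≤ 1)
    (hc0 : 0 ≤ c) (hc1 : c ≤ 1)
    (hab : a ≤ b * c + Real.sqrt (1 - b ^ 2) * Real.sqrt (1 - c ^ 2)) :
    Real.arccos b ≤ Real.arccos a + Real.arccos c := by
  by_cases h : Real.arccos b ≤ Real.arccos c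
  · linarith [Real.arccos_nonneg a]
  · push_neg at h
    have hy0 : 0 ≤ Real.arccos b - Real.arccos c := by linarith
    have hyπ : Real.arccos b - Real.arccos c ≤ π := by
      linarith [Real.arccos_le_pi b, Real.arccos_nonneg c]
    have hcos : Real.cos (Real.arccos b - Real.arccos c)
        = b * c + Real.sqrt (1 - b ^ 2) * Real.sqrt (1 - c ^ 2) := by
      rw [Real.cos_sub, Real.cos_arccos (by linarith) hb1, Real.cos_arccos (by linarith) hc1,
        Real.sin_arccos, Real.sin_arccos]
    have h2 : a ≤ Real.cos (Real.arccos b - Real.arccos c) := by rw [hcos]; exact hab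
    have h3 := arccos_anti' h2
    rw [Real.arccos_cos hy0 hyπ] at h3
    linarith

private lemma key1' {a b c : ℝ} (hb0 : 0 ≤ b) (hb1 : b ≤ 1) (hc0 : 0 ≤ c) (hc1 : c ≤ 1)
    (hab : a ≤ b * c + Real.sqrt (1 - b ^ 2) * Real.sqrt (1 - c ^ 2)) :
    a - b ≤ Real.sqrt (1 - c ^ 2) := by
  have h1 : Real.sqrt (1 - b ^ 2) ≤ 1 := by
    exact Real.sqrt_le_one.mpr (by nlinarith)
  have h2 : 0 ≤ Real.sqrt (1 - c ^ 2) := Real.sqrt_nonneg _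
  have h3 : 0 ≤ Real.sqrt (1 - b ^ 2) := Real.sqrt_nonneg _
  nlinarith

private lemma projnorm' {E : Type*} [NormedAddCommGroup E] [InnerProductSpace ℂ E] (x y : E)
    (hx : ‖x‖ = 1) (hy : ‖y‖ = 1) :
    ‖x - ⟪y, x⟫ • y‖ ^ 2 = 1 - ‖⟪x, y⟫‖ ^ 2 := by
  rw [norm_sub_sq (𝕜 := ℂ), hx, inner_smul_right, norm_smul, hy]
  rw [← inner_conj_symm x y]
  simp only [Complex.mul_conj, Complex.norm_conj, Complex.normSq_eq_norm_sq]
  norm_cast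
  simp [Complex.sq_norm]
  ring

private lemma tri' {E : Type*} [NormedAddCommGroup E] [InnerProductSpace ℂ E] (u v w : E)
    (hu : ‖u‖ = 1) (hv : ‖v‖ = 1) (hw : ‖w‖ = 1) :
    ‖⟪u, w⟫‖ ≤ ‖⟪u, v⟫‖ * ‖⟪v, w⟫‖ +
      Real.sqrt (1 - ‖⟪u, v⟫‖ ^ 2) * Real.sqrt (1 - ‖⟪v, w⟫‖ ^ 2) := by
  have hvv : (⟪v, v⟫ : ℂ) = 1 := by
    rw [inner_self_eq_norm_sq_to_K, hv]; norm_num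
  set u' := u - ⟪v, u⟫ • v with hu'def
  set w' := w - ⟪v, w⟫ • v with hw'def
  have hinn : (⟪u', w'⟫ : ℂ) = ⟪u, w⟫ - ⟪u, v⟫ * ⟪v, w⟫ := by
    rw [hu'def, hw'def, inner_sub_left, inner_sub_right, inner_sub_right, inner_smul_left,
      inner_smul_right, inner_smul_left, inner_smul_right, hvv, inner_conj_symm]
    ring
  have hnu' : ‖u'‖ ^ 2 = 1 - ‖⟪u, v⟫‖ ^ 2 := projnorm' u v hu hv
  have hnw' : ‖w'‖ ^ 2 = 1 - ‖⟪w, v⟫‖ ^ 2 := projnorm' w v hw hv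
  have habs : ‖⟪u, w⟫‖ ≤ ‖⟪u, v⟫ * ⟪v, w⟫‖ + ‖⟪u', w'⟫‖ := by
    have h : (⟪u, w⟫ : ℂ) = ⟪u, v⟫ * ⟪v, w⟫ + ⟪u', w'⟫ := by rw [hinn]; ring
    rw [h]
    exact norm_add_le _ _
  have hCS : ‖⟪u', w'⟫‖ ≤ ‖u'‖ * ‖w'‖ := by
    exact norm_inner_le_norm u' w'
  have hnu'' : ‖u'‖ = Real.sqrt (1 - ‖⟪u, v⟫‖ ^ 2) := by
    rw [← hnu', Real.sqrt_sq (norm_nonneg _)]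
  have hnw'' : ‖w'‖ = Real.sqrt (1 - ‖⟪v, w⟫‖ ^ 2) := by
    rw [← inner_conj_symm v w, Complex.norm_conj, ← hnw', Real.sqrt_sq (norm_nonneg _)]
  rw [norm_mul] at habs
  rw [hnu'', hnw''] at hCS
  linarith

theorem stmt6 {n : ℕ} (H : Fin n → Matrix (Fin n) (Fin n) ℂ)
    (hdensity : ∀ i, ((H i)ᴴ * H i).trace = 1)
    (i j q : Fin n) (hij : i < j) (hjq : j < q) :
    (|‖((H i)ᴴ * H j).trace‖ - ‖((H i)ᴴ * H q).trace‖| ≤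
        Real.sqrt (1 - ‖((H j)ᴴ * H q).trace‖ ^ 2) ∧
      Real.sqrt (1 - ‖((H j)ᴴ * H q).trace‖ ^ 2) ≤
        Real.sqrt 2 * Real.sqrt (1 - ‖((H j)ᴴ * H q).trace‖)) ∧
    ∀ k : ℝ, 2 ≤ k →
      |‖((H i)ᴴ * H j).trace‖ ^ k - ‖((H i)ᴴ * H q).trace‖ ^ k| ≤
        Real.sqrt (1 - ‖((H j)ᴴ * H q).trace‖ ^ k) := by
  set v : Fin n → EuclideanSpace ℂ (Fin n × Fin n) :=
    fun m => (WithLp.equiv 2 _).symm (fun p => H m p.1 p.2) with hvdef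
  have hinner : ∀ m l, ⟪v m, v l⟫ = ((H m)ᴴ * H l).trace := by
    intro m l
    simp only [hvdef, PiLp.inner_apply, RCLike.inner_apply, Matrix.trace, Matrix.diag,
      Matrix.mul_apply, Matrix.conjTranspose_apply, WithLp.equiv_symm_apply, PiLp.toLp_apply]
    rw [Fintype.sum_prod_type, Finset.sum_comm]
    simp [mul_comm]
  have hnorm : ∀ m, ‖v m‖ = 1 := by
    intro m
    have h := hinner m m
    rw [hdensity m] at h
    have h2 := inner_self_eq_norm_sq_to_K (𝕜 := ℂ) (v m)
    rw [h] at h2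
    have h3 : (‖v m‖ : ℝ) ^ 2 = 1 := by
      have h4 : ((‖v m‖ ^ 2 : ℝ) : ℂ) = 1 := by push_cast; exact h2.symm
      exact Complex.ofReal_eq_one.mp h4
    nlinarith [norm_nonneg (v m)]
  set a := ‖((H i)ᴴ * H j).trace‖ with hadef
  set b := ‖((H i)ᴴ * H q).trace‖ with hbdef
  set c := ‖((H j)ᴴ * H q).trace‖ with hcdef
  have hai : a = ‖⟪v i, v j⟫‖ := by rw [hinner]
  have hbi : b = ‖⟪v i, v q⟫‖ := by rw [hinner]
  have hci : c = ‖⟪v j, v q⟫‖ := by rw [hinner]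
  have hconj : ∀ m l, ‖⟪v m, v l⟫‖ = ‖⟪v l, v m⟫‖ := by
    intro m l
    rw [← inner_conj_symm (v l) (v m), Complex.norm_conj]
  have ha0 : 0 ≤ a := by rw [hai]; exact norm_nonneg _
  have hb0 : 0 ≤ b := by rw [hbi]; exact norm_nonneg _
  have hc0 : 0 ≤ c := by rw [hci]; exact norm_nonneg _
  have hle1 : ∀ m l, ‖⟪v m, v l⟫‖ ≤ 1 := by
    intro m l
    have h := norm_inner_le_norm (𝕜 := ℂ) (v m) (v l)
    rw [hnorm, hnorm] at h
    simpa using h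
  have ha1 : a ≤ 1 := by rw [hai]; exact hle1 i j
  have hb1 : b ≤ 1 := by rw [hbi]; exact hle1 i q
  have hc1 : c ≤ 1 := by rw [hci]; exact hle1 j q
  -- instance 1 : a ≤ b * c + √(1-b²)√(1-c²)
  have hA : a ≤ b * c + Real.sqrt (1 - b ^ 2) * Real.sqrt (1 - c ^ 2) := by
    have h := tri' (v i) (v q) (v j) (hnorm i) (hnorm q) (hnorm j)
    rw [← hai, ← hbi, hconj q j, ← hci] at h
    exact h
  -- instance 2 : b ≤ a * c + √(1-a²)√(1-c²)
  have hB : b ≤ a * c + Real.sqrt (1 - a ^ 2) * Real.sqrt (1 - c ^ 2) := by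
    have h := tri' (v i) (v j) (v q) (hnorm i) (hnorm j) (hnorm q)
    rw [← hai, ← hbi, ← hci] at h
    exact h
  refine ⟨⟨?_, ?_⟩, ?_⟩
  · rw [abs_sub_le_iff]
    exact ⟨key1' hb0 hb1 hc0 hc1 hA, key1' ha0 ha1 hc0 hc1 hB⟩
  · have h1 : 1 - c ^ 2 ≤ 2 * (1 - c) := by nlinarith
    calc Real.sqrt (1 - c ^ 2) ≤ Real.sqrt (2 * (1 - c)) := Real.sqrt_le_sqrt h1
      _ = Real.sqrt 2 * Real.sqrt (1 - c) := Real.sqrt_mul (by norm_num) _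
  · intro k hk
    rw [abs_sub_le_iff]
    constructor
    · exact keyk' hk ha0 ha1 hb0 hb1 hc0 hc1 (tri_angle' ha0 ha1 hb0 hb1 hc0 hc1 hA)
    · exact keyk' hk hb0 hb1 ha0 ha1 hc0 hc1 (tri_angle' hb0 hb1 ha0 ha1 hc0 hc1 hB)
end

section
/- Let a, b, c be real numbers such that the 3×3 matrix B = [[1,a,b],[a,1,c],[b,c,1]] is positive semidefinite. Set c₋ = ab − √((1−a²)(1−b²)), c₊ = ab + √((1−a²)(1−b²)), Δ = max{√(1−c₋²), √(1−c₊²)}, and δ = min{√(1−c₋²), √(1−c₊²)}. If f is a real-valued function on the interval [c₋, c₊] with δ ≤ f(x) for all x ∈ [c₋, c₊], then |a² − b²| ≤ Δ·f(x) for all x ∈ [c₋, c₊]. In particular, |a² − b²| ≤ Δ·√(1 − c²). -/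
open Real

set_option maxHeartbeats 1600000 in
theorem stmt8 (a b c : ℝ)
    (hB : Matrix.PosSemidef !![1, a, b; a, 1, c; b, c, 1])
    (cm cp Δ δ : ℝ)
    (hcm : cm = a * b - Real.sqrt ((1 - a ^ 2) * (1 - b ^ 2)))
    (hcp : cp = a * b + Real.sqrt ((1 - a ^ 2) * (1 - b ^ 2)))
    (hΔ : Δ = max (Real.sqrt (1 - cm ^ 2)) (Real.sqrt (1 - cp ^ 2)))
    (hδ : δ = min (Real.sqrt (1 - cm ^ 2)) (Real.sqrt (1 - cp ^ 2)))
    (f : ℝ → ℝ) (hf : ∀ x ∈ Set.Icc cm cp, δ ≤ f x) :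
    (∀ x ∈ Set.Icc cm cp, |a ^ 2 - b ^ 2| ≤ Δ * f x) ∧
      |a ^ 2 - b ^ 2| ≤ Δ * Real.sqrt (1 - c ^ 2) := by
  set s := Real.sqrt ((1 - a ^ 2) * (1 - b ^ 2)) with hs
  -- quadratic form bounds
  have ha2 : a ^ 2 ≤ 1 := by
    have h := hB.dotProduct_mulVec_nonneg ![1, -a, 0]
    simp [Matrix.mulVec, dotProduct, Fin.sum_univ_succ] at h
    nlinarith [h]
  have hb2 : b ^ 2 ≤ 1 := by
    have h := hB.dotProduct_mulVec_nonneg ![1, 0, -b]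
    simp [Matrix.mulVec, dotProduct, Fin.sum_univ_succ] at h
    nlinarith [h]
  have hdet : (0:ℝ) ≤ 1 + 2*a*b*c - a^2 - b^2 - c^2 := by
    have h : (0:ℝ) ≤ (!![1, a, b; a, 1, c; b, c, 1]).det := by
      rw [hB.1.det_eq_prod_eigenvalues]
      exact Finset.prod_nonneg fun i _ => hB.eigenvalues_nonneg i
    rw [Matrix.det_fin_three] at h
    simp at h
    nlinarith [h]
  have hsnn : 0 ≤ s := Real.sqrt_nonneg _
  have hssq : s ^ 2 = (1 - a ^ 2) * (1 - b ^ 2) := by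
    rw [hs, sq, Real.mul_self_sqrt (by nlinarith)]
  have hcple : cp ≤ 1 := by
    have : s ≤ 1 - a*b := by
      have h1 : s ≤ Real.sqrt ((1 - a*b)^2) := by
        apply Real.sqrt_le_sqrt; nlinarith [sq_nonneg (a-b)]
      rwa [Real.sqrt_sq (by nlinarith)] at h1
    linarith [hcp ▸ le_refl cp]
  have hcmge : -1 ≤ cm := by
    have : s ≤ 1 + a*b := by
      have h1 : s ≤ Real.sqrt ((1 + a*b)^2) := by
        apply Real.sqrt_le_sqrt; nlinarith [sq_nonneg (a+b)]
      rwa [Real.sqrt_sq (by nlinarith)] at h1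
    rw [hcm]; linarith
  have hcmcp : cm ≤ cp := by rw [hcm, hcp]; linarith
  have hcm1 : cm ^ 2 ≤ 1 := by nlinarith
  have hcp1 : cp ^ 2 ≤ 1 := by nlinarith
  -- key identity
  have hprod : (1 - cm ^ 2) * (1 - cp ^ 2) = (a^2 - b^2)^2 := by
    rw [hcm, hcp]
    nlinarith [hssq, sq_nonneg s, sq_nonneg (a*b)]
  have hkey : Δ * δ = |a ^ 2 - b ^ 2| := by
    have h1 : Δ * δ = Real.sqrt (1 - cm ^ 2) * Real.sqrt (1 - cp ^ 2) := by
      rw [hΔ, hδ]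
      rcases le_total (Real.sqrt (1 - cm ^ 2)) (Real.sqrt (1 - cp ^ 2)) with h | h
      · rw [max_eq_right h, min_eq_left h]; ring
      · rw [max_eq_left h, min_eq_right h]
    rw [h1, ← Real.sqrt_mul (by linarith), hprod, Real.sqrt_sq_eq_abs]
  have hΔnn : 0 ≤ Δ := by rw [hΔ]; exact le_max_of_le_left (Real.sqrt_nonneg _)
  constructor
  · intro x hx
    calc |a ^ 2 - b ^ 2| = Δ * δ := hkey.symm
      _ ≤ Δ * f x := by
          apply mul_le_mul_of_nonneg_left (hf x hx) hΔnn
  · have hc : c ∈ Set.Icc cm cp := by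
      constructor
      · rw [hcm]
        have : a*b - c ≤ s := by
          have h1 : Real.sqrt ((a*b - c)^2) ≤ s := by
            apply Real.sqrt_le_sqrt; nlinarith [hdet]
          calc a*b - c ≤ |a*b - c| := le_abs_self _
            _ = Real.sqrt ((a*b - c)^2) := (Real.sqrt_sq_eq_abs _).symm
            _ ≤ s := h1
        linarith
      · rw [hcp]
        have : c - a*b ≤ s := by
          have h1 : Real.sqrt ((c - a*b)^2) ≤ s := by
            apply Real.sqrt_le_sqrt; nlinarith [hdet]
          calc c - a*b ≤ |c - a*b| := le_abs_self _
            _ = Real.sqrt ((c - a*b)^2) := (Real.sqrt_sq_eq_abs _).symm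
            _ ≤ s := h1
        linarith
    have hδle : δ ≤ Real.sqrt (1 - c ^ 2) := by
      have hmono : Monotone Real.sqrt := fun _ _ h => Real.sqrt_le_sqrt h
      have : δ = Real.sqrt (min (1 - cm ^ 2) (1 - cp ^ 2)) := by
        rw [hδ, hmono.map_min]
      rw [this]
      apply Real.sqrt_le_sqrt
      have hp : 0 ≤ (c - cm) * (cp - c) :=
        mul_nonneg (by linarith [hc.1]) (by linarith [hc.2])
      rcases le_total (1 - cm ^ 2) (1 - cp ^ 2) with h | h
      · rw [min_eq_left h]
        nlinarith [hp, sq_nonneg (c + cm), sq_nonneg (c - cm), sq_nonneg (cm + cp)]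
      · rw [min_eq_right h]
        nlinarith [hp, sq_nonneg (c + cp), sq_nonneg (c - cp), sq_nonneg (cm + cp)]
    calc |a ^ 2 - b ^ 2| = Δ * δ := hkey.symm
      _ ≤ Δ * Real.sqrt (1 - c ^ 2) := mul_le_mul_of_nonneg_left hδle hΔnn
end

section
/- Let a, b, c be real numbers such that the 3×3 matrix B = [[1,a,b],[a,1,c],[b,c,1]] is positive semidefinite. Then | |a| − |b| | ≤ √(1 − |c|²) ≤ √2 · √(1 − |c|), and for every real number k ≥ 2, | |a|^k − |b|^k | ≤ √(1 − |c|^k). -/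
set_option maxHeartbeats 1000000

open Real

-- (c^2)^m = (c^m)^2 for rpow
lemma sq_rpow_comm {c : ℝ} (hc : 0 ≤ c) (m : ℝ) : (c^2) ^ m = (c ^ m)^2 := by
  rw [← Real.rpow_natCast c 2, ← Real.rpow_natCast (c ^ m) 2,
      ← Real.rpow_mul hc, ← Real.rpow_mul hc]
  norm_num [mul_comm]

lemma hda (a b m : ℝ) (hm : 1 ≤ m) (u : ℝ) :
    HasDerivAt (fun u : ℝ => (a + u*b) ^ m) (m * (a + u*b) ^ (m-1) * b) u := by
  have h1 : HasDerivAt (fun u : ℝ => a + u*b) b u := by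
    simpa using ((hasDerivAt_id u).mul_const b).const_add a
  have h2 := Real.hasDerivAt_rpow_const (x := a + u*b) (p := m) (Or.inr hm)
  exact h2.comp u h1

lemma mono01 (F G : ℝ → ℝ) (hd : ∀ u, HasDerivAt F (G u) u)
    (hG : ∀ u ∈ Set.Icc (0:ℝ) 1, 0 ≤ G u) : F 0 ≤ F 1 := by
  have hmono := monotoneOn_of_deriv_nonneg (convex_Icc (0:ℝ) 1)
    (fun u _ => (hd u).continuousAt.continuousWithinAt)
    (fun u hu => (hd u).differentiableAt.differentiableWithinAt)
    (fun u hu => by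
      rw [(hd u).deriv]
      rw [interior_Icc] at hu
      exact hG u ⟨le_of_lt hu.1, le_of_lt hu.2⟩)
  exact hmono (by norm_num) (by norm_num) zero_le_one

lemma fh2 (p c1 s1 c2 s2 v1 v2 : ℝ) (hp : 0 ≤ p)
    (h1 : 0 ≤ c1) (h2 : 0 ≤ s1) (h3 : 0 ≤ c2) (h4 : 0 ≤ s2) :
    0 ≤ v1^2 * (c1^2+s1^2)^p + v2^2 * (c2^2+s2^2)^p + 2*(v1*v2) * (c1*c2+s1*s2)^p := by
  have hA : (0:ℝ) ≤ c1^2+s1^2 := by positivity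
  have hB : (0:ℝ) ≤ c2^2+s2^2 := by positivity
  have hC : (0:ℝ) ≤ c1*c2+s1*s2 := by positivity
  have hCS : (c1*c2+s1*s2)^2 ≤ (c1^2+s1^2)*(c2^2+s2^2) := by nlinarith [sq_nonneg (c1*s2 - s1*c2)]
  have e1 : ((c1^2+s1^2)^(p/2))^2 = (c1^2+s1^2)^p := by
    rw [← Real.rpow_natCast ((c1^2+s1^2)^(p/2)) 2, ← Real.rpow_mul hA]
    norm_num
  have e2 : ((c2^2+s2^2)^(p/2))^2 = (c2^2+s2^2)^p := by
    rw [← Real.rpow_natCast ((c2^2+s2^2)^(p/2)) 2, ← Real.rpow_mul hB]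
    norm_num
  have e3 : (c1*c2+s1*s2)^p ≤ (c1^2+s1^2)^(p/2) * (c2^2+s2^2)^(p/2) := by
    have c1' : (c1*c2+s1*s2)^p = ((c1*c2+s1*s2)^2)^(p/2) := by
      rw [← Real.rpow_natCast (c1*c2+s1*s2) 2, ← Real.rpow_mul hC,
          show ((2:ℕ):ℝ)*(p/2) = p by push_cast; ring]
    have c2' : ((c1*c2+s1*s2)^2)^(p/2) ≤ ((c1^2+s1^2)*(c2^2+s2^2))^(p/2) :=
      Real.rpow_le_rpow (sq_nonneg _) hCS (by positivity)
    have c3' : ((c1^2+s1^2)*(c2^2+s2^2))^(p/2) = (c1^2+s1^2)^(p/2) * (c2^2+s2^2)^(p/2) :=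
      Real.mul_rpow hA hB
    rw [c1']; rw [c3'] at c2'; exact c2'
  have hCp : 0 ≤ (c1*c2+s1*s2)^p := Real.rpow_nonneg hC p
  have ha' : 0 ≤ (c1^2+s1^2)^(p/2) := Real.rpow_nonneg hA _
  have hb' : 0 ≤ (c2^2+s2^2)^(p/2) := Real.rpow_nonneg hB _
  rcases le_or_gt 0 (v1*v2) with hv | hv
  · have : 0 ≤ 2*(v1*v2)*(c1*c2+s1*s2)^p := by positivity
    nlinarith [sq_nonneg (v1*(c1^2+s1^2)^(p/2)), sq_nonneg (v2*(c2^2+s2^2)^(p/2))]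
  · have h5 : 2*(v1*v2)*((c1^2+s1^2)^(p/2) * (c2^2+s2^2)^(p/2)) ≤ 2*(v1*v2)*(c1*c2+s1*s2)^p := by
      apply mul_le_mul_of_nonpos_left e3 (by linarith)
    nlinarith [sq_nonneg (v1*(c1^2+s1^2)^(p/2) + v2*(c2^2+s2^2)^(p/2))]

lemma fh3aux (m c1 c2 s2 c3 s3 w1 w2 w3 : ℝ) (hm : 1 ≤ m)
    (hc1 : 0 ≤ c1) (hc2 : 0 ≤ c2) (hs2 : 0 ≤ s2) (hc3 : 0 ≤ c3) (hs3 : 0 ≤ s3) :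
    0 ≤ w1^2*(c1^2)^m + w2^2*(c2^2+s2^2)^m + w3^2*(c3^2+s3^2)^m
      + 2*(w1*w2)*(c1*c2)^m + 2*(w1*w3)*(c1*c3)^m + 2*(w2*w3)*(c2*c3+s2*s3)^m := by
  set F : ℝ → ℝ := fun u => w1^2*(c1^2)^m + w2^2*(c2^2+u*s2^2)^m + w3^2*(c3^2+u*s3^2)^m
      + 2*(w1*w2)*(c1*c2)^m + 2*(w1*w3)*(c1*c3)^m + 2*(w2*w3)*(c2*c3+u*(s2*s3))^m with hF
  set G : ℝ → ℝ := fun u => m * ((w2*s2)^2 * (c2^2+u*s2^2)^(m-1)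
      + (w3*s3)^2 * (c3^2+u*s3^2)^(m-1)
      + 2*((w2*s2)*(w3*s3)) * (c2*c3+u*(s2*s3))^(m-1)) with hG
  have hd : ∀ u, HasDerivAt F (G u) u := by
    intro u
    have d1 := ((hda (c2^2) (s2^2) m hm u).const_mul (w2^2))
    have d2 := ((hda (c3^2) (s3^2) m hm u).const_mul (w3^2))
    have d3 := ((hda (c2*c3) (s2*s3) m hm u).const_mul (2*(w2*w3)))
    have dsum := ((d1.add d2).add d3)
    have dF : HasDerivAt F (w2^2 * (m * (c2^2+u*s2^2)^(m-1) * s2^2)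
        + w3^2 * (m * (c3^2+u*s3^2)^(m-1) * s3^2)
        + 2*(w2*w3) * (m * (c2*c3+u*(s2*s3))^(m-1) * (s2*s3))) u := by
      rw [hF]
      have : (fun u : ℝ => w1^2*(c1^2)^m + w2^2*(c2^2+u*s2^2)^m + w3^2*(c3^2+u*s3^2)^m
          + 2*(w1*w2)*(c1*c2)^m + 2*(w1*w3)*(c1*c3)^m + 2*(w2*w3)*(c2*c3+u*(s2*s3))^m)
          = fun u : ℝ => (w2^2*(c2^2+u*s2^2)^m + w3^2*(c3^2+u*s3^2)^m
            + 2*(w2*w3)*(c2*c3+u*(s2*s3))^m)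
            + (w1^2*(c1^2)^m + 2*(w1*w2)*(c1*c2)^m + 2*(w1*w3)*(c1*c3)^m) := by
        funext v; ring
      rw [this]
      exact dsum.add_const _
    convert dF using 1
    rw [hG]; ring
  have hGpos : ∀ u ∈ Set.Icc (0:ℝ) 1, 0 ≤ G u := by
    intro u hu
    have hu0 : (0:ℝ) ≤ u := hu.1
    have h := fh2 (m-1) c2 (Real.sqrt u * s2) c3 (Real.sqrt u * s3) (w2*s2) (w3*s3)
      (by linarith) hc2 (by positivity) hc3 (by positivity)
    have r1 : (Real.sqrt u * s2)^2 = u * s2^2 := by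
      rw [mul_pow, Real.sq_sqrt hu0]
    have r2 : (Real.sqrt u * s3)^2 = u * s3^2 := by
      rw [mul_pow, Real.sq_sqrt hu0]
    have r3 : Real.sqrt u * s2 * (Real.sqrt u * s3) = u * (s2*s3) := by
      rw [show Real.sqrt u * s2 * (Real.sqrt u * s3) = (Real.sqrt u)^2 * (s2*s3) by ring,
          Real.sq_sqrt hu0]
    rw [r1, r2, r3] at h
    rw [hG]
    have hm0 : (0:ℝ) ≤ m := by linarith
    have : c2^2 + u*s2^2 = c2^2 + u*s2^2 := rfl
    apply mul_nonneg hm0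
    calc (0:ℝ) ≤ (w2*s2)^2 * (c2^2+u*s2^2)^(m-1) + (w3*s3)^2 * (c3^2+u*s3^2)^(m-1)
        + 2*((w2*s2)*(w3*s3)) * (c2*c3+u*(s2*s3))^(m-1) := by
          convert h using 3 <;> ring
      _ = _ := rfl
  have h01 := mono01 F G hd hGpos
  have hF0 : 0 ≤ F 0 := by
    have e0 : F 0 = w1^2*(c1^2)^m + w2^2*(c2^2)^m + w3^2*(c3^2)^m
        + 2*(w1*w2)*(c1*c2)^m + 2*(w1*w3)*(c1*c3)^m + 2*(w2*w3)*(c2*c3)^m := by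
      rw [hF]; norm_num
    rw [e0, sq_rpow_comm hc1, sq_rpow_comm hc2, sq_rpow_comm hc3,
        Real.mul_rpow hc1 hc2, Real.mul_rpow hc1 hc3, Real.mul_rpow hc2 hc3]
    nlinarith [sq_nonneg (w1*c1^m + w2*c2^m + w3*c3^m)]
  have hF1 : F 1 = w1^2*(c1^2)^m + w2^2*(c2^2+s2^2)^m + w3^2*(c3^2+s3^2)^m
      + 2*(w1*w2)*(c1*c2)^m + 2*(w1*w3)*(c1*c3)^m + 2*(w2*w3)*(c2*c3+s2*s3)^m := by
    rw [hF]; norm_num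
  rw [← hF1]; linarith

lemma fh3 (m c1 s1 c2 s2 c3 s3 w1 w2 w3 : ℝ) (hm : 1 ≤ m)
    (hc1 : 0 ≤ c1) (hs1 : 0 ≤ s1) (hc2 : 0 ≤ c2) (hs2 : 0 ≤ s2) (hc3 : 0 ≤ c3) (hs3 : 0 ≤ s3)
    (h12 : s1*c2 ≤ c1*s2) (h13 : s1*c3 ≤ c1*s3) :
    0 ≤ w1^2*(c1^2+s1^2)^m + w2^2*(c2^2+s2^2)^m + w3^2*(c3^2+s3^2)^m
      + 2*(w1*w2)*(c1*c2+s1*s2)^m + 2*(w1*w3)*(c1*c3+s1*s3)^m + 2*(w2*w3)*(c2*c3+s2*s3)^m := by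
  have hm0 : m ≠ 0 := by linarith
  by_cases hzero : c1^2+s1^2 = 0
  · have hc10 : c1 = 0 := by nlinarith [sq_nonneg c1, sq_nonneg s1]
    have hs10 : s1 = 0 := by nlinarith [sq_nonneg c1, sq_nonneg s1]
    subst hc10; subst hs10
    have h := fh2 m c2 s2 c3 s3 w2 w3 (by linarith) hc2 hs2 hc3 hs3
    norm_num [Real.zero_rpow hm0]
    calc (0:ℝ) ≤ w2^2 * (c2^2+s2^2)^m + w3^2 * (c3^2+s3^2)^m + 2*(w2*w3) * (c2*c3+s2*s3)^m := h
      _ = _ := by ring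
  · have hd2 : 0 < c1^2+s1^2 := lt_of_le_of_ne (by positivity) (Ne.symm hzero)
    set d := Real.sqrt (c1^2+s1^2) with hdd
    have hd0 : 0 < d := Real.sqrt_pos.2 hd2
    have hdsq : d^2 = c1^2+s1^2 := Real.sq_sqrt (le_of_lt hd2)
    have hdne : d ≠ 0 := ne_of_gt hd0
    set C2 := (c1*c2+s1*s2)/d with hC2
    set S2 := (c1*s2-s1*c2)/d with hS2
    set C3 := (c1*c3+s1*s3)/d with hC3
    set S3 := (c1*s3-s1*c3)/d with hS3
    have key := fh3aux m d C2 S2 C3 S3 w1 w2 w3 hm (le_of_lt hd0)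
      (by rw [hC2]; positivity)
      (by rw [hS2]; apply div_nonneg (by linarith) (le_of_lt hd0))
      (by rw [hC3]; positivity)
      (by rw [hS3]; apply div_nonneg (by linarith) (le_of_lt hd0))
    have id1 : (d^2)^m = (c1^2+s1^2)^m := by rw [hdsq]
    have id2 : C2^2+S2^2 = c2^2+s2^2 := by
      rw [hC2, hS2]
      rw [div_pow, div_pow, ← add_div]
      rw [show (c1*c2+s1*s2)^2 + (c1*s2-s1*c2)^2 = (c1^2+s1^2)*(c2^2+s2^2) by ring, ← hdsq]
      field_simp
    have id3 : C3^2+S3^2 = c3^2+s3^2 := by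
      rw [hC3, hS3]
      rw [div_pow, div_pow, ← add_div]
      rw [show (c1*c3+s1*s3)^2 + (c1*s3-s1*c3)^2 = (c1^2+s1^2)*(c3^2+s3^2) by ring, ← hdsq]
      field_simp
    have id4 : d*C2 = c1*c2+s1*s2 := by rw [hC2]; field_simp
    have id5 : d*C3 = c1*c3+s1*s3 := by rw [hC3]; field_simp
    have id6 : C2*C3+S2*S3 = c2*c3+s2*s3 := by
      rw [hC2, hS2, hC3, hS3]
      rw [div_mul_div_comm, div_mul_div_comm, ← add_div]
      rw [show (c1*c2+s1*s2)*(c1*c3+s1*s3) + (c1*s2-s1*c2)*(c1*s3-s1*c3)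
          = (c1^2+s1^2)*(c2*c3+s2*s3) by ring, ← hdsq]
      field_simp
    rw [id1, id2, id3, id4, id5, id6] at key
    exact key

lemma fh4 (k c2 s2 c3 s3 c4 s4 v1 v2 v3 v4 : ℝ) (hk : 2 ≤ k)
    (hc2 : 0 ≤ c2) (hs2 : 0 ≤ s2) (hc3 : 0 ≤ c3) (hs3 : 0 ≤ s3) (hc4 : 0 ≤ c4) (hs4 : 0 ≤ s4)
    (h23 : s2*c3 ≤ c2*s3) (h24 : s2*c4 ≤ c2*s4) :
    0 ≤ v1^2 + v2^2*(c2^2+s2^2)^k + v3^2*(c3^2+s3^2)^k + v4^2*(c4^2+s4^2)^k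
      + 2*(v1*v2)*c2^k + 2*(v1*v3)*c3^k + 2*(v1*v4)*c4^k
      + 2*(v2*v3)*(c2*c3+s2*s3)^k + 2*(v2*v4)*(c2*c4+s2*s4)^k + 2*(v3*v4)*(c3*c4+s3*s4)^k := by
  have hk1 : (1:ℝ) ≤ k := by linarith
  set F : ℝ → ℝ := fun u => v1^2 + v2^2*(c2^2+u*s2^2)^k + v3^2*(c3^2+u*s3^2)^k
      + v4^2*(c4^2+u*s4^2)^k
      + 2*(v1*v2)*c2^k + 2*(v1*v3)*c3^k + 2*(v1*v4)*c4^k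
      + 2*(v2*v3)*(c2*c3+u*(s2*s3))^k + 2*(v2*v4)*(c2*c4+u*(s2*s4))^k
      + 2*(v3*v4)*(c3*c4+u*(s3*s4))^k with hF
  set G : ℝ → ℝ := fun u => k * ((v2*s2)^2*(c2^2+u*s2^2)^(k-1)
      + (v3*s3)^2*(c3^2+u*s3^2)^(k-1) + (v4*s4)^2*(c4^2+u*s4^2)^(k-1)
      + 2*((v2*s2)*(v3*s3))*(c2*c3+u*(s2*s3))^(k-1)
      + 2*((v2*s2)*(v4*s4))*(c2*c4+u*(s2*s4))^(k-1)
      + 2*((v3*s3)*(v4*s4))*(c3*c4+u*(s3*s4))^(k-1)) with hG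
  have hd : ∀ u, HasDerivAt F (G u) u := by
    intro u
    have d1 := ((hda (c2^2) (s2^2) k hk1 u).const_mul (v2^2))
    have d2 := ((hda (c3^2) (s3^2) k hk1 u).const_mul (v3^2))
    have d3 := ((hda (c4^2) (s4^2) k hk1 u).const_mul (v4^2))
    have d4 := ((hda (c2*c3) (s2*s3) k hk1 u).const_mul (2*(v2*v3)))
    have d5 := ((hda (c2*c4) (s2*s4) k hk1 u).const_mul (2*(v2*v4)))
    have d6 := ((hda (c3*c4) (s3*s4) k hk1 u).const_mul (2*(v3*v4)))
    have dsum := ((((d1.add d2).add d3).add d4).add d5).add d6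
    have dF : HasDerivAt F (v2^2 * (k * (c2^2+u*s2^2)^(k-1) * s2^2)
        + v3^2 * (k * (c3^2+u*s3^2)^(k-1) * s3^2)
        + v4^2 * (k * (c4^2+u*s4^2)^(k-1) * s4^2)
        + 2*(v2*v3) * (k * (c2*c3+u*(s2*s3))^(k-1) * (s2*s3))
        + 2*(v2*v4) * (k * (c2*c4+u*(s2*s4))^(k-1) * (s2*s4))
        + 2*(v3*v4) * (k * (c3*c4+u*(s3*s4))^(k-1) * (s3*s4))) u := by
      rw [hF]
      have heq : (fun u : ℝ => v1^2 + v2^2*(c2^2+u*s2^2)^k + v3^2*(c3^2+u*s3^2)^k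
          + v4^2*(c4^2+u*s4^2)^k
          + 2*(v1*v2)*c2^k + 2*(v1*v3)*c3^k + 2*(v1*v4)*c4^k
          + 2*(v2*v3)*(c2*c3+u*(s2*s3))^k + 2*(v2*v4)*(c2*c4+u*(s2*s4))^k
          + 2*(v3*v4)*(c3*c4+u*(s3*s4))^k)
          = fun u : ℝ => (v2^2*(c2^2+u*s2^2)^k + v3^2*(c3^2+u*s3^2)^k
            + v4^2*(c4^2+u*s4^2)^k + 2*(v2*v3)*(c2*c3+u*(s2*s3))^k
            + 2*(v2*v4)*(c2*c4+u*(s2*s4))^k + 2*(v3*v4)*(c3*c4+u*(s3*s4))^k)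
            + (v1^2 + 2*(v1*v2)*c2^k + 2*(v1*v3)*c3^k + 2*(v1*v4)*c4^k) := by
        funext v; ring
      rw [heq]
      exact dsum.add_const _
    convert dF using 1
    rw [hG]; ring
  have hGpos : ∀ u ∈ Set.Icc (0:ℝ) 1, 0 ≤ G u := by
    intro u hu
    have hu0 : (0:ℝ) ≤ u := hu.1
    have hsu : (0:ℝ) ≤ Real.sqrt u := Real.sqrt_nonneg u
    have h := fh3 (k-1) c2 (Real.sqrt u * s2) c3 (Real.sqrt u * s3) c4 (Real.sqrt u * s4)
      (v2*s2) (v3*s3) (v4*s4) (by linarith)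
      hc2 (by positivity) hc3 (by positivity) hc4 (by positivity)
      (by calc Real.sqrt u * s2 * c3 = Real.sqrt u * (s2*c3) := by ring
            _ ≤ Real.sqrt u * (c2*s3) := by
                apply mul_le_mul_of_nonneg_left h23 hsu
            _ = c2 * (Real.sqrt u * s3) := by ring)
      (by calc Real.sqrt u * s2 * c4 = Real.sqrt u * (s2*c4) := by ring
            _ ≤ Real.sqrt u * (c2*s4) := by
                apply mul_le_mul_of_nonneg_left h24 hsu
            _ = c2 * (Real.sqrt u * s4) := by ring)
    have r2 : (Real.sqrt u * s2)^2 = u * s2^2 := by rw [mul_pow, Real.sq_sqrt hu0]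
    have r3 : (Real.sqrt u * s3)^2 = u * s3^2 := by rw [mul_pow, Real.sq_sqrt hu0]
    have r4 : (Real.sqrt u * s4)^2 = u * s4^2 := by rw [mul_pow, Real.sq_sqrt hu0]
    have r23 : Real.sqrt u * s2 * (Real.sqrt u * s3) = u * (s2*s3) := by
      rw [show Real.sqrt u * s2 * (Real.sqrt u * s3) = (Real.sqrt u)^2 * (s2*s3) by ring,
          Real.sq_sqrt hu0]
    have r24 : Real.sqrt u * s2 * (Real.sqrt u * s4) = u * (s2*s4) := by
      rw [show Real.sqrt u * s2 * (Real.sqrt u * s4) = (Real.sqrt u)^2 * (s2*s4) by ring,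
          Real.sq_sqrt hu0]
    have r34 : Real.sqrt u * s3 * (Real.sqrt u * s4) = u * (s3*s4) := by
      rw [show Real.sqrt u * s3 * (Real.sqrt u * s4) = (Real.sqrt u)^2 * (s3*s4) by ring,
          Real.sq_sqrt hu0]
    rw [r2, r3, r4, r23, r24, r34] at h
    rw [hG]
    apply mul_nonneg (by linarith : (0:ℝ) ≤ k)
    calc (0:ℝ) ≤ (v2*s2)^2*(c2^2+u*s2^2)^(k-1) + (v3*s3)^2*(c3^2+u*s3^2)^(k-1)
        + (v4*s4)^2*(c4^2+u*s4^2)^(k-1)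
        + 2*((v2*s2)*(v3*s3))*(c2*c3+u*(s2*s3))^(k-1)
        + 2*((v2*s2)*(v4*s4))*(c2*c4+u*(s2*s4))^(k-1)
        + 2*((v3*s3)*(v4*s4))*(c3*c4+u*(s3*s4))^(k-1) := by
          convert h using 2 <;> ring
      _ = _ := rfl
  have h01 := mono01 F G hd hGpos
  have hk0 : (0:ℝ) ≤ k := by linarith
  have hF0 : 0 ≤ F 0 := by
    have e0 : F 0 = v1^2 + v2^2*(c2^2)^k + v3^2*(c3^2)^k + v4^2*(c4^2)^k
        + 2*(v1*v2)*c2^k + 2*(v1*v3)*c3^k + 2*(v1*v4)*c4^k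
        + 2*(v2*v3)*(c2*c3)^k + 2*(v2*v4)*(c2*c4)^k + 2*(v3*v4)*(c3*c4)^k := by
      rw [hF]; norm_num
    rw [e0, sq_rpow_comm hc2, sq_rpow_comm hc3, sq_rpow_comm hc4,
        Real.mul_rpow hc2 hc3, Real.mul_rpow hc2 hc4, Real.mul_rpow hc3 hc4]
    nlinarith [sq_nonneg (v1 + v2*c2^k + v3*c3^k + v4*c4^k)]
  have hF1 : F 1 = v1^2 + v2^2*(c2^2+s2^2)^k + v3^2*(c3^2+s3^2)^k + v4^2*(c4^2+s4^2)^k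
      + 2*(v1*v2)*c2^k + 2*(v1*v3)*c3^k + 2*(v1*v4)*c4^k
      + 2*(v2*v3)*(c2*c3+s2*s3)^k + 2*(v2*v4)*(c2*c4+s2*s4)^k
      + 2*(v3*v4)*(c3*c4+s3*s4)^k := by
    rw [hF]; norm_num
  rw [← hF1]; linarith

lemma gmono (m A B : ℝ) (hm : 1 ≤ m) (hB0 : 0 ≤ B) (hBA : B ≤ A) (hAB1 : A + B ≤ 1) :
    A^m + (1-A)^m ≤ B^m + (1-B)^m := by
  by_cases hB2 : (1:ℝ) - 2*B = 0
  · have hA : A = B := by nlinarith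
    rw [hA]
  · have hBlt : B < 1/2 := by rcases lt_or_gt_of_ne hB2 with h | h <;> nlinarith
    have hden : (0:ℝ) < 1 - 2*B := by linarith
    set θ := (1-B-A)/(1-2*B) with hθ
    have hθ0 : 0 ≤ θ := div_nonneg (by linarith) (le_of_lt hden)
    have hθ1 : θ ≤ 1 := by rw [hθ, div_le_one hden]; linarith
    have hcon := convexOn_rpow hm
    have hmemB : B ∈ Set.Ici (0:ℝ) := Set.mem_Ici.2 hB0
    have hmemB' : (1-B) ∈ Set.Ici (0:ℝ) := Set.mem_Ici.2 (by linarith)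
    have h1 := hcon.2 hmemB hmemB' hθ0 (by linarith : (0:ℝ) ≤ 1-θ) (by ring)
    have h2 := hcon.2 hmemB hmemB' (by linarith : (0:ℝ) ≤ 1-θ) hθ0 (by ring)
    simp only [smul_eq_mul] at h1 h2
    have eA : θ*B + (1-θ)*(1-B) = A := by
      rw [hθ]; rw [div_mul_eq_mul_div, one_sub_div hB2, div_mul_eq_mul_div, ← add_div, div_eq_iff hB2]; ring
    have eA' : (1-θ)*B + θ*(1-B) = 1-A := by
      rw [hθ]; rw [one_sub_div hB2, div_mul_eq_mul_div, div_mul_eq_mul_div, ← add_div, div_eq_iff hB2]; ring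
    rw [eA] at h1
    rw [eA'] at h2
    linarith

lemma keylem (x y z k : ℝ) (hy0 : 0 ≤ y) (hyx : y ≤ x) (hx1 : x ≤ 1) (hz0 : 0 ≤ z)
    (hz1 : z ≤ 1) (hdet : (z - x*y)^2 ≤ (1-x^2)*(1-y^2)) (hk : 2 ≤ k) :
    (x^k - y^k)^2 ≤ 1 - z^k := by
  have hx0 : 0 ≤ x := le_trans hy0 hyx
  have hy1 : y ≤ 1 := le_trans hyx hx1
  have hk0 : (0:ℝ) ≤ k := by linarith
  have hx2 : (0:ℝ) ≤ 1 - x^2 := by nlinarith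
  have hy2 : (0:ℝ) ≤ 1 - y^2 := by nlinarith
  set xb := Real.sqrt (1-x^2) with hxb
  set yb := Real.sqrt (1-y^2) with hyb
  have hxb0 : 0 ≤ xb := Real.sqrt_nonneg _
  have hyb0 : 0 ≤ yb := Real.sqrt_nonneg _
  have hxb2 : xb^2 = 1-x^2 := Real.sq_sqrt hx2
  have hyb2 : yb^2 = 1-y^2 := Real.sq_sqrt hy2
  set c := x*y + xb*yb with hc
  have hc0 : 0 ≤ c := by positivity
  have hc1 : c ≤ 1 := by nlinarith [sq_nonneg (x*yb - xb*y)]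
  have hzc : z ≤ c := by nlinarith [mul_nonneg hxb0 hyb0]
  have hzk : z^k ≤ c^k := Real.rpow_le_rpow hz0 hzc hk0
  have hck1 : c^k ≤ 1 := Real.rpow_le_one hc0 hc1 hk0
  have hcm : (0:ℝ) ≤ 1 - c^k := by linarith
  -- main inequality with c instead of z
  suffices h : (x^k - y^k)^2 ≤ 1 - c^k by linarith
  have hD0 : 0 ≤ x^k - y^k := by
    have := Real.rpow_le_rpow hy0 hyx hk0
    linarith
  -- sorted hyp : xb*y ≤ x*yb
  have hsort : xb*y ≤ x*yb := by
    nlinarith [sq_nonneg (xb*y), sq_nonneg (x*yb), mul_nonneg hxb0 hy0, mul_nonneg hx0 hyb0]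
  by_cases hcase : x^2 + y^2 ≤ 1
  · -- use fourth point (0,1)
    have hxbyb : xb ≤ yb := Real.sqrt_le_sqrt (by nlinarith)
    have hE0 : 0 ≤ yb^k - xb^k := by
      have := Real.rpow_le_rpow hxb0 hxbyb hk0
      linarith
    have hkne : k ≠ 0 := by intro h; rw [h] at hk; norm_num at hk
    have W := fh4 k x xb y yb 0 1 (-(x^k - y^k)) 1 (-1) (yb^k - xb^k) hk
      hx0 hxb0 hy0 hyb0 le_rfl zero_le_one hsort (by rw [mul_zero, mul_one]; exact hx0)
    rw [show x^2+xb^2 = 1 by rw [hxb2]; ring, show y^2+yb^2 = 1 by rw [hyb2]; ring,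
        show (0:ℝ)^2+1^2 = 1 by norm_num, show x*0+xb*1 = xb by ring,
        show y*0+yb*1 = yb by ring, ← hc, Real.one_rpow, Real.zero_rpow hkne] at W
    have hDE2 : (x^k - y^k)^2 + (yb^k - xb^k)^2 ≤ 2*(1 - c^k) := by nlinarith [W]
    -- show D ≤ E via gmono
    have hxk : x^k = (x^2)^(k/2) := by
      rw [← Real.rpow_natCast x 2, ← Real.rpow_mul hx0,
          show ((2:ℕ):ℝ)*(k/2) = k by push_cast; ring]
    have hyk : y^k = (y^2)^(k/2) := by
      rw [← Real.rpow_natCast y 2, ← Real.rpow_mul hy0,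
          show ((2:ℕ):ℝ)*(k/2) = k by push_cast; ring]
    have hxbk : xb^k = (1-x^2)^(k/2) := by
      rw [← hxb2, ← Real.rpow_natCast xb 2, ← Real.rpow_mul hxb0,
          show ((2:ℕ):ℝ)*(k/2) = k by push_cast; ring]
    have hybk : yb^k = (1-y^2)^(k/2) := by
      rw [← hyb2, ← Real.rpow_natCast yb 2, ← Real.rpow_mul hyb0,
          show ((2:ℕ):ℝ)*(k/2) = k by push_cast; ring]
    have hgm := gmono (k/2) (x^2) (y^2) (by linarith) (sq_nonneg y) (by nlinarith) hcase
    have hDE : x^k - y^k ≤ yb^k - xb^k := by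
      rw [hxk, hyk, hxbk, hybk]; linarith
    nlinarith [hDE2, mul_self_le_mul_self hD0 hDE]
  · -- use fourth point (x*y - xb*yb, xb*y + x*yb)
    push_neg at hcase
    set e := x*y - xb*yb with he
    set f := xb*y + x*yb with hf
    have he0 : 0 ≤ e := by
      nlinarith [mul_nonneg hxb0 hyb0, mul_nonneg hx0 hy0]
    have hf0 : 0 ≤ f := by positivity
    have hef1 : e^2 + f^2 = 1 := by
      rw [he, hf]; linear_combination (y^2 + yb^2) * hxb2 + hyb2
    have hp24 : x*e + xb*f = y := by
      rw [he, hf]; linear_combination y * hxb2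
    have hp34 : y*e + yb*f = x := by
      rw [he, hf]; linear_combination x * hyb2
    have h24 : xb*e ≤ x*f := by
      have : x*f - xb*e = yb := by rw [he, hf]; linear_combination yb * hxb2
      linarith
    have hq : ∀ s : ℝ, 0 ≤ (2-2*e^k) * (s*s) + (4*(x^k - y^k)) * s + (2-2*c^k) := by
      intro s
      have W := fh4 k x xb y yb e f s 1 (-1) (-s) hk hx0 hxb0 hy0 hyb0 he0 hf0 hsort h24
      rw [show x^2+xb^2 = 1 by rw [hxb2]; ring, show y^2+yb^2 = 1 by rw [hyb2]; ring,
          hef1, hp24, hp34] at W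
      rw [Real.one_rpow] at W
      nlinarith [W]
    have hdisc := discrim_le_zero hq
    rw [discrim] at hdisc
    have hek0 : 0 ≤ e^k := Real.rpow_nonneg he0 k
    nlinarith [hdisc, mul_nonneg hek0 hcm]

theorem stmt12 (a b c : ℝ)
    (hB : Matrix.PosSemidef !![1, a, b; a, 1, c; b, c, 1]) :
    (|(|a| - |b|)| ≤ Real.sqrt (1 - |c| ^ 2) ∧
      Real.sqrt (1 - |c| ^ 2) ≤ Real.sqrt 2 * Real.sqrt (1 - |c|)) ∧
    ∀ k : ℝ, 2 ≤ k → |(|a| ^ k - |b| ^ k)| ≤ Real.sqrt (1 - |c| ^ k) := by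
  have ha2 : a^2 ≤ 1 := by
    have hq : ∀ t : ℝ, 0 ≤ 1*(t*t) + (2*a)*t + 1 := by
      intro t
      have h := hB.dotProduct_mulVec_nonneg ![1, t, 0]
      simp [Matrix.mulVec, dotProduct, Fin.sum_univ_three] at h
      nlinarith [h]
    have := discrim_le_zero hq
    rw [discrim] at this
    nlinarith [this]
  have hb2 : b^2 ≤ 1 := by
    have hq : ∀ t : ℝ, 0 ≤ 1*(t*t) + (2*b)*t + 1 := by
      intro t
      have h := hB.dotProduct_mulVec_nonneg ![1, 0, t]
      simp [Matrix.mulVec, dotProduct, Fin.sum_univ_three] at h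
      nlinarith [h]
    have := discrim_le_zero hq
    rw [discrim] at this
    nlinarith [this]
  have hc2 : c^2 ≤ 1 := by
    have hq : ∀ t : ℝ, 0 ≤ 1*(t*t) + (2*c)*t + 1 := by
      intro t
      have h := hB.dotProduct_mulVec_nonneg ![0, 1, t]
      simp [Matrix.mulVec, dotProduct, Fin.sum_univ_three] at h
      nlinarith [h]
    have := discrim_le_zero hq
    rw [discrim] at this
    nlinarith [this]
  have hschur : (c - a*b)^2 ≤ (1-a^2)*(1-b^2) := by
    have hq : ∀ u : ℝ, 0 ≤ (1-a^2)*(u*u) + (2*(c-a*b))*u + (1-b^2) := by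
      intro u
      have h := hB.dotProduct_mulVec_nonneg ![-(a*u+b), u, 1]
      simp [Matrix.mulVec, dotProduct, Fin.sum_univ_three] at h
      nlinarith [h]
    have := discrim_le_zero hq
    rw [discrim] at this
    nlinarith [this]
  have hx0 : (0:ℝ) ≤ |a| := abs_nonneg a
  have hy0 : (0:ℝ) ≤ |b| := abs_nonneg b
  have hz0 : (0:ℝ) ≤ |c| := abs_nonneg c
  have hx1 : |a| ≤ 1 := by nlinarith [sq_abs a, hx0]
  have hy1 : |b| ≤ 1 := by nlinarith [sq_abs b, hy0]
  have hz1 : |c| ≤ 1 := by nlinarith [sq_abs c, hz0]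
  have habs : a*b*c ≤ |a| * |b| * |c| := by
    calc a*b*c ≤ |a*b*c| := le_abs_self _
      _ = |a| * |b| * |c| := by rw [abs_mul, abs_mul]
  have hdetx : (|c| - |a| * |b|)^2 ≤ (1-|a|^2)*(1-|b|^2) := by
    have e1 : |a|^2 = a^2 := sq_abs a
    have e2 : |b|^2 = b^2 := sq_abs b
    have e3 : |c|^2 = c^2 := sq_abs c
    nlinarith [hschur, habs, e1, e2, e3]
  constructor
  · constructor
    · have h1 : (|a| - |b|)^2 ≤ 1 - |c|^2 := by
        nlinarith [hdetx, mul_nonneg (mul_nonneg hx0 hy0) (by linarith : (0:ℝ) ≤ 1 - |c|)]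
      calc |(|a| - |b|)| = Real.sqrt ((|a| - |b|)^2) := (Real.sqrt_sq_eq_abs _).symm
        _ ≤ Real.sqrt (1 - |c|^2) := Real.sqrt_le_sqrt h1
    · rw [← Real.sqrt_mul (by norm_num : (0:ℝ) ≤ 2)]
      apply Real.sqrt_le_sqrt
      nlinarith
  · intro k hk
    rcases le_total (|b|) (|a|) with h | h
    · have hkey := keylem (|a|) (|b|) (|c|) k hy0 h hx1 hz0 hz1 hdetx hk
      calc |(|a|^k - |b|^k)| = Real.sqrt ((|a|^k - |b|^k)^2) := (Real.sqrt_sq_eq_abs _).symm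
        _ ≤ Real.sqrt (1 - |c|^k) := Real.sqrt_le_sqrt hkey
    · have hdetx' : (|c| - |b| * |a|)^2 ≤ (1-|b|^2)*(1-|a|^2) := by
        rw [mul_comm (1-|b|^2)]
        rw [mul_comm (|b|)]
        exact hdetx
      have hkey := keylem (|b|) (|a|) (|c|) k hx0 h hy1 hz0 hz1 hdetx' hk
      rw [abs_sub_comm]
      calc |(|b|^k - |a|^k)| = Real.sqrt ((|b|^k - |a|^k)^2) := (Real.sqrt_sq_eq_abs _).symm
        _ ≤ Real.sqrt (1 - |c|^k) := Real.sqrt_le_sqrt hkey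
end

section
/- Let α, β, γ be real numbers with 0 ≤ α, β, γ ≤ π/2 and |α − β| ≤ γ ≤ α + β. Then for every positive integer k, |cos^k α − cos^k β| ≤ √k · sin γ. -/
open Real


private lemma a2' (r C : ℝ) (hr1 : 1 < 2*r) (hr2 : 2*r^2 ≤ 1) (hC0 : 0 ≤ C) (h : r^2 ≤ 1 - C^3) :
    (2*r-1)^2 ≤ (1-C^2)*r^2 := by
  have t1 : C^2 ≤ 0.7905*C^3 + 0.2372 := by
    nlinarith [mul_nonneg hC0 (sq_nonneg (C - 0.8434)), sq_nonneg (C - 0.8434)]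
  have t2 : (0.7905*r^2 - 0.0277)*r^2 ≤ (1-C^2)*r^2 := by
    have : 0.7905*r^2 - 0.0277 ≤ 1-C^2 := by nlinarith
    nlinarith [sq_nonneg r, this]
  have t3 : (2*r-1)^2 ≤ (0.7905*r^2 - 0.0277)*r^2 := by
    nlinarith [mul_nonneg (by linarith : (0:ℝ) ≤ 1-2*r^2) (by linarith : (0:ℝ) ≤ 2*r-1),
      sq_nonneg (1-2*r^2), sq_nonneg (2*r-1), mul_nonneg (mul_nonneg (by linarith : (0:ℝ) ≤ 1-2*r^2) (by linarith : (0:ℝ) ≤ 2*r-1)) (by linarith : (0:ℝ) ≤ 2*r-1),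
      mul_nonneg (mul_nonneg (by linarith : (0:ℝ) ≤ 1-2*r^2) (by linarith : (0:ℝ) ≤ 1-2*r^2)) (by linarith : (0:ℝ) ≤ 2*r-1)]
  linarith

private lemma caseB' (r B : ℝ) (hr1 : 1 < 2*r) (hr2 : 2*r^2 ≤ 1) (hB0 : 0 ≤ B) (hBr : B ≤ r^2)
    (hc : 1 - r^2 ≤ (1-B)^3) : (2*r-1)^2*(1-B) ≤ r^2*(r^2-B) := by
  nlinarith [sq_nonneg (2*r-1), sq_nonneg (r^2-B), mul_nonneg hB0 hB0, sq_nonneg (1-B),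
    sq_nonneg (2*r^2-1), mul_pos (by linarith : (0:ℝ) < 2*r-1) (by linarith : (0:ℝ) < 2*r-1)]

private lemma caseA' (r B : ℝ) (hr1 : 1 < 2*r) (hr2 : 2*r^2 ≤ 1) (hB0 : 0 ≤ B) (hBr : B ≤ r^2)
    (hc : (1-B)^3 ≤ 1 - r^2) : (2*r-1)^2*(r^2-B) ≤ (1-B)*B^2*(2-B)^2*r^2 := by
  have hA1 : r^2 - B ≤ B*(1-B)*(2-B) := by nlinarith [hc]
  have hA2 : (2*r-1)^2 ≤ B*(2-B)*r^2 := by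
    have := a2' r (1-B) hr1 hr2 (by nlinarith) (by nlinarith [hc])
    nlinarith [this]
  have h1 : (2*r-1)^2*(r^2-B) ≤ (B*(2-B)*r^2)*(B*(1-B)*(2-B)) := by
    apply mul_le_mul hA2 hA1 (by linarith) (by nlinarith [sq_nonneg r])
  nlinarith [h1]

private lemma core3 (y u r : ℝ) (hy0 : 0 ≤ y) (hy1 : y ≤ 1) (hu0 : 0 ≤ u) (huy : u ≤ y^2)
    (hr1 : 1 < 2*r) (hr2 : 2*r^2 ≤ 1) (hP1 : u^2*y^2 ≤ 1 - r^2) (hT : 1 - y^2 ≤ r^2) :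
    (2*r-1)^2*(r^2-(1-y^2)) ≤ y^2*(1-u^2)^2*r^2 := by
  set B : ℝ := 1 - y^2 with hB
  have hB0 : 0 ≤ B := by nlinarith
  have hBr : B ≤ r^2 := hT
  have hu1 : u ≤ 1 := by nlinarith
  have h1u : 0 ≤ 1 - u^2 := by nlinarith
  by_cases hcase : (1-B)^3 ≤ 1 - r^2
  · -- use caseA'
    have hca := caseA' r B hr1 hr2 hB0 hBr hcase
    have hq : B^2*(2-B)^2 ≤ (1-u^2)^2 := by
      have h2 : B*(2-B) ≤ 1-u^2 := by nlinarith [sq_nonneg u, mul_le_mul huy huy hu0 (by nlinarith : (0:ℝ) ≤ y^2)]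
      have h3 : 0 ≤ B*(2-B) := by nlinarith
      nlinarith [mul_le_mul h2 h2 h3 h1u]
    have hy2 : (1:ℝ) - B = y^2 := by rw [hB]; ring
    calc (2*r-1)^2*(r^2-B) ≤ (1-B)*B^2*(2-B)^2*r^2 := hca
      _ ≤ (1-B)*(1-u^2)^2*r^2 := by nlinarith [mul_le_mul_of_nonneg_left hq (show (0:ℝ) ≤ (1-B)*r^2 by nlinarith [sq_nonneg r])]
      _ = y^2*(1-u^2)^2*r^2 := by rw [hy2]
  · push_neg at hcase
    have hcb := caseB' r B hr1 hr2 hB0 hBr (le_of_lt hcase)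
    have hy2 : y^2 = 1 - B := by rw [hB]; ring
    have hy2pos : (0:ℝ) < y^2 := by nlinarith
    have hkey : r^2 - B ≤ y^2*(1-u^2) := by nlinarith [hP1]
    have hk0 : 0 ≤ r^2 - B := by linarith
    -- multiply target by y^2
    have hsq : (r^2-B)^2 ≤ (y^2*(1-u^2))^2 := by
      exact pow_le_pow_left₀ hk0 hkey 2
    have main : (2*r-1)^2*(r^2-B)*y^2 ≤ y^2*(1-u^2)^2*r^2*y^2 := by
      calc (2*r-1)^2*(r^2-B)*y^2 = ((2*r-1)^2*(1-B))*(r^2-B) := by rw [hy2]; ring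
        _ ≤ (r^2*(r^2-B))*(r^2-B) := by apply mul_le_mul_of_nonneg_right hcb hk0
        _ = r^2*(r^2-B)^2 := by ring
        _ ≤ r^2*(y^2*(1-u^2))^2 := by apply mul_le_mul_of_nonneg_left hsq (by positivity)
        _ = y^2*(1-u^2)^2*r^2*y^2 := by ring
    exact le_of_mul_le_mul_right main hy2pos


-- y^(k+1) - x^(k+1) <= (k+1) y^k (y-x)
private lemma sl1 (x y : ℝ) (hx : 0 ≤ x) (hxy : x ≤ y) :
    ∀ k : ℕ, y^(k+1) - x^(k+1) ≤ (k+1) * y^k * (y - x) := by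
  intro k
  induction k with
  | zero => simp
  | succ n ih =>
    have hy : 0 ≤ y := hx.trans hxy
    have hxy' : x^(n+1) ≤ y^(n+1) := pow_le_pow_left₀ hx hxy (n+1)
    have h1 : y^(n+1+1) - x^(n+1+1) = y*(y^(n+1) - x^(n+1)) + x^(n+1)*(y-x) := by ring
    have h2 : y*(y^(n+1) - x^(n+1)) ≤ y*((n+1) * y^n * (y - x)) :=
      mul_le_mul_of_nonneg_left ih hy
    have h3 : x^(n+1)*(y-x) ≤ y^(n+1)*(y-x) :=
      mul_le_mul_of_nonneg_right hxy' (by linarith)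
    have h4 : y*((n+1) * y^n * (y - x)) = (n+1) * y^(n+1) * (y-x) := by ring
    push_cast
    push_cast at h2 h3 h4 ih
    nlinarith [h2, h3]

-- Weierstrass: (1-c)^n (1+nc) <= 1
private lemma weier (c : ℝ) (h0 : 0 ≤ c) (h1 : c ≤ 1) :
    ∀ n : ℕ, (1-c)^n * (1 + n*c) ≤ 1 := by
  intro n
  induction n with
  | zero => simp
  | succ n ih =>
    have hc0 : (0:ℝ) ≤ 1 - c := by linarith
    have hp : (0:ℝ) ≤ (1-c)^n := pow_nonneg hc0 n
    have key : (1-c)^(n+1) * (1 + (n+1)*c) ≤ (1-c)^n * (1 + n*c) := by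
      have expand : (1-c)^(n+1) * (1 + (n+1)*c) = (1-c)^n * ((1-c)*(1 + (n+1)*c)) := by ring
      rw [expand]
      apply mul_le_mul_of_nonneg_left _ hp
      have : (1-c)*(1 + (n+1)*c) = 1 + n*c - (n+1)*c^2 := by push_cast; ring
      rw [this]
      nlinarith [sq_nonneg c, Nat.cast_nonneg (α := ℝ) n]
    push_cast at key ih ⊢
    linarith

-- quadratic Bernoulli: 2 + 2nc + n(n-1)c^2 <= 2(1+c)^n
private lemma bern2 (c : ℝ) (h0 : 0 ≤ c) :
    ∀ n : ℕ, 2 + 2*n*c + n*(n-1)*c^2 ≤ 2*(1+c)^n := by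
  intro n
  induction n with
  | zero => norm_num
  | succ n ih =>
    have h1 : (0:ℝ) ≤ 1 + c := by linarith
    have h2 : (2 + 2*n*c + n*(n-1)*c^2) * (1+c) ≤ 2*(1+c)^n * (1+c) := by
      apply mul_le_mul_of_nonneg_right ih h1
    have h3 : 2*(1+c)^n * (1+c) = 2*(1+c)^(n+1) := by ring
    have hn0 : (0:ℝ) ≤ n := Nat.cast_nonneg n
    have hnn : (0:ℝ) ≤ (n:ℝ)*((n:ℝ)-1) := by
      rcases Nat.eq_zero_or_pos n with h|h
      · subst h; norm_num
      · have : (1:ℝ) ≤ (n:ℝ) := by exact_mod_cast h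
        nlinarith
    push_cast at h2 ih ⊢
    nlinarith [h2, mul_nonneg hnn (mul_nonneg (mul_nonneg h0 h0) h0)]

-- main power fact: 2 k c (1-c)^(k-1) <= 1 for k >= 3
private lemma f1 (k : ℕ) (hk : 3 ≤ k) (c : ℝ) (h0 : 0 ≤ c) (h1 : c ≤ 1) :
    2*k*c*(1-c)^(k-1) ≤ 1 := by
  have hc0 : (0:ℝ) ≤ 1 - c := by linarith
  by_cases hk7 : k ≤ 7
  · interval_cases k
    · show 2*(3:ℕ)*c*(1-c)^2 ≤ 1
      push_cast
      nlinarith [mul_nonneg hc0 (sq_nonneg (3*c-1)), sq_nonneg (3*c-1), mul_nonneg h0 h0]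
    · show 2*(4:ℕ)*c*(1-c)^3 ≤ 1
      push_cast
      nlinarith [mul_nonneg (mul_nonneg hc0 hc0) (sq_nonneg (4*c-1)), sq_nonneg (4*c-1), mul_nonneg h0 h0, sq_nonneg (1-c), mul_nonneg h0 (sq_nonneg (1-c))]
    · show 2*(5:ℕ)*c*(1-c)^4 ≤ 1
      push_cast
      nlinarith [mul_nonneg (mul_nonneg (mul_nonneg hc0 hc0) hc0) (sq_nonneg (5*c-1)), sq_nonneg (5*c-1), mul_nonneg h0 h0, mul_nonneg h0 (sq_nonneg (1-c)), mul_nonneg (mul_nonneg h0 h0) (sq_nonneg (1-c)), sq_nonneg ((1-c)*(5*c-1)), mul_nonneg hc0 (sq_nonneg ((1-c)*(5*c-1)))]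
    · show 2*(6:ℕ)*c*(1-c)^5 ≤ 1
      push_cast
      nlinarith [mul_nonneg (mul_nonneg (mul_nonneg (mul_nonneg hc0 hc0) hc0) hc0) (sq_nonneg (6*c-1)), sq_nonneg (6*c-1), mul_nonneg h0 h0, sq_nonneg ((1-c)^2*(6*c-1)), mul_nonneg hc0 (sq_nonneg ((1-c)^2*(6*c-1))), mul_nonneg h0 (sq_nonneg (1-c)), sq_nonneg ((1-c)*(6*c-1))]
    · show 2*(7:ℕ)*c*(1-c)^6 ≤ 1
      push_cast
      nlinarith [sq_nonneg ((1-c)^2*(7*c-1)), mul_nonneg (mul_nonneg hc0 hc0) (sq_nonneg ((1-c)^2*(7*c-1))), sq_nonneg (7*c-1), mul_nonneg h0 h0, mul_nonneg hc0 (sq_nonneg ((1-c)^2*(7*c-1))), sq_nonneg ((1-c)*(7*c-1)), sq_nonneg ((1-c)^3*(7*c-1))]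
  · push_neg at hk7
    have hk8 : (8:ℝ) ≤ (k:ℝ) := by exact_mod_cast hk7
    set m : ℕ := k - 1 with hm
    have hmk : (m:ℝ) = (k:ℝ) - 1 := by
      have h' : m + 1 = k := by omega
      rw [← h']; push_cast; ring
    have hq : 4*(k:ℝ)*c ≤ 2 + 2*((k:ℝ)-1)*c + ((k:ℝ)-1)*((k:ℝ)-2)*c^2 := by
      nlinarith [sq_nonneg (2*((k:ℝ)-1)*((k:ℝ)-2)*c - (2*(k:ℝ)+2)),
        mul_pos (by linarith : (0:ℝ) < (k:ℝ)-1) (by linarith : (0:ℝ) < (k:ℝ)-2),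
        (by nlinarith : (0:ℝ) ≤ (k:ℝ)^2 - 8*(k:ℝ) + 3), sq_nonneg c]
    have hbern := bern2 c h0 m
    have hp : (0:ℝ) ≤ (1-c)^m := pow_nonneg hc0 m
    have step1 : (4*(k:ℝ)*c) * (1-c)^m ≤ (2 + 2*(m:ℝ)*c + (m:ℝ)*((m:ℝ)-1)*c^2) * (1-c)^m := by
      apply mul_le_mul_of_nonneg_right _ hp
      rw [hmk]; linarith [hq]
    have step2 : (2 + 2*(m:ℝ)*c + (m:ℝ)*((m:ℝ)-1)*c^2) * (1-c)^m ≤ (2*(1+c)^m) * (1-c)^m := by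
      apply mul_le_mul_of_nonneg_right hbern hp
    have step3 : (2*(1+c)^m) * (1-c)^m = 2*((1+c)*(1-c))^m := by rw [mul_pow]; ring
    have step4 : ((1+c)*(1-c))^m ≤ 1 := by
      apply pow_le_one₀ (by nlinarith) (by nlinarith)
    have : (4*(k:ℝ)*c) * (1-c)^m ≤ 2 := by
      rw [step3] at step2; nlinarith [step1, step2, step4]
    linarith



private lemma rho_le_one (t : ℝ) (h0 : 0 ≤ t) (h : 2*t^2 ≤ 1) : t ≤ 1 := by nlinarith

set_option maxHeartbeats 2000000 in
private lemma notC_case (x y a b K u : ℝ)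
    (hx0 : 0 ≤ x) (hxy : x ≤ y) (hy1 : y ≤ 1) (hb0 : 0 ≤ b) (hba : b ≤ a) (ha1 : a ≤ 1)
    (hax : a^2 + x^2 = 1) (hby : b^2 + y^2 = 1) (hK0 : 0 ≤ K)
    (hu0 : 0 < u) (hu1 : u ≤ 1) (huy2 : u ≤ y^2) (hy0' : 0 < y)
    (hF1 : 2*(K*u*b)^2 ≤ 1) (hP1 : u^2*y^2 ≤ 1 - (K*u*b)^2)
    (hC : x + y < K*u*(a*y + b*x)) : u*y ≤ K*(a*y - b*x) := by
  have hy0 : 0 ≤ y := le_of_lt hy0'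
  have ha0 : 0 ≤ a := hb0.trans hba
  have hrho0 : 0 ≤ K*u*b := mul_nonneg (mul_nonneg hK0 (le_of_lt hu0)) hb0
  have hrho1 : K*u*b ≤ 1 := rho_le_one _ hrho0 hF1
  have hKua : 1 < K*u*a := by
    have h1 : (K*u*b)*x ≤ x := by nlinarith [mul_le_mul_of_nonneg_right hrho1 hx0]
    have h2 : K*u*(a*y + b*x) = (K*u*a)*y + (K*u*b)*x := by ring
    rw [h2] at hC
    nlinarith [hC, h1]
  have hKu1 : 1 < K*u := by nlinarith [mul_le_mul_of_nonneg_left ha1 (mul_nonneg hK0 (le_of_lt hu0))]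
  have hxb : (K*u)^2 * x^2 ≤ (K*u)^2 - 1 := by
    have h1 : 1 < (K*u*a)^2 := by nlinarith [hKua]
    have h2 : (K*u*a)^2 = (K*u)^2*(1 - x^2) := by
      have h3 : a^2 = 1 - x^2 := by linarith [hax]
      calc (K*u*a)^2 = (K*u)^2*a^2 := by ring
        _ = (K*u)^2*(1-x^2) := by rw [h3]
    nlinarith [h1, h2]
  have key : u^2*y + (2*(K*u*b) - 1)*x ≤ y := by
    by_cases hrr : 2*(K*u*b) ≤ 1
    · nlinarith [mul_nonneg (le_of_lt hu0) (le_of_lt hu0), hx0, hu1]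
    · push_neg at hrr
      have hTB : 1 - y^2 ≤ (K*u*b)^2 := by
        have e1 : (K*u*b)^2 = (K*u)^2*b^2 := by ring
        have e2 : b^2 = 1 - y^2 := by linarith [hby]
        nlinarith [hKu1, e1, e2, sq_nonneg b]
      have hcore := core3 y u (K*u*b) hy0 hy1 (le_of_lt hu0) huy2 hrr (by linarith [hF1]) hP1 hTB
      have hb0' : 0 < b := by
        rcases eq_or_lt_of_le hb0 with h|h
        · exfalso; rw [← h] at hrr; simp at hrr; linarith
        · exact h
      have hKu2pos : (0:ℝ) < (K*u)^2 := by nlinarith [hKu1]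
      have hstep1 : (2*(K*u*b)-1)^2*((K*u)^2-1) ≤ y^2*(1-u^2)^2*(K*u)^2 := by
        have e2 : b^2 = 1 - y^2 := by linarith [hby]
        have e3 : (K*u*b)^2 - (1 - y^2) = b^2*((K*u)^2-1) := by rw [← e2]; ring
        have e4 : (K*u*b)^2 = b^2*(K*u)^2 := by ring
        rw [e3, e4] at hcore
        have hb2pos : 0 < b^2 := pow_pos hb0' 2
        have h5 : ((2*(K*u*b)-1)^2*((K*u)^2-1))*b^2 ≤ (y^2*(1-u^2)^2*(K*u)^2)*b^2 := by
          nlinarith [hcore]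
        exact le_of_mul_le_mul_right h5 hb2pos
      have hstep2 : ((2*(K*u*b)-1)*x)^2*(K*u)^2 ≤ (y*(1-u^2))^2*(K*u)^2 := by
        have h1 : ((2*(K*u*b)-1)*x)^2*(K*u)^2 = (2*(K*u*b)-1)^2*((K*u)^2*x^2) := by ring
        have h2 : (2*(K*u*b)-1)^2*((K*u)^2*x^2) ≤ (2*(K*u*b)-1)^2*((K*u)^2-1) :=
          mul_le_mul_of_nonneg_left hxb (sq_nonneg _)
        calc ((2*(K*u*b)-1)*x)^2*(K*u)^2 = (2*(K*u*b)-1)^2*((K*u)^2*x^2) := h1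
          _ ≤ (2*(K*u*b)-1)^2*((K*u)^2-1) := h2
          _ ≤ y^2*(1-u^2)^2*(K*u)^2 := hstep1
          _ = (y*(1-u^2))^2*(K*u)^2 := by ring
      have hsq : ((2*(K*u*b)-1)*x)^2 ≤ (y*(1-u^2))^2 := le_of_mul_le_mul_right hstep2 hKu2pos
      have h1u2 : 0 ≤ y*(1-u^2) := by nlinarith [hu1, hu0]
      have hfin : (2*(K*u*b)-1)*x ≤ y*(1-u^2) := by
        have hx2 : 0 ≤ (2*(K*u*b)-1)*x := by nlinarith [hx0]
        nlinarith [hsq, hx2, h1u2]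
      nlinarith [hfin]
  have hfinal : u*(u*y) < u*(K*(a*y - b*x)) := by
    have e1 : u*(K*(a*y - b*x)) = K*u*(a*y + b*x) - 2*(K*u*b)*x := by ring
    rw [e1]
    nlinarith [key, hC]
  have := lt_of_mul_lt_mul_left hfinal (le_of_lt hu0)
  linarith

set_option maxHeartbeats 2000000 in
private lemma main_alg (k : ℕ) (hk : 1 ≤ k) (x y a b K : ℝ)
    (hx0 : 0 ≤ x) (hxy : x ≤ y) (hy1 : y ≤ 1) (hb0 : 0 ≤ b) (hba : b ≤ a) (ha1 : a ≤ 1)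
    (hax : a^2 + x^2 = 1) (hby : b^2 + y^2 = 1) (hK0 : 0 ≤ K) (hKk : K^2 = (k:ℝ)) (hK1 : 1 ≤ K) :
    y^k - x^k ≤ K * (a*y - b*x) := by
  have hy0 : 0 ≤ y := hx0.trans hxy
  have ha0 : 0 ≤ a := hb0.trans hba
  have hx1 : x ≤ 1 := hxy.trans hy1
  have hb1 : b ≤ 1 := hba.trans ha1
  have hs0 : 0 ≤ a*y - b*x := by nlinarith [mul_le_mul hba hxy hx0 ha0]
  have hgeom : (y - x)*(x + y) = (a*y - b*x)*(a*y + b*x) := by linear_combination (-(y^2))*hax + x^2*hby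
  have habxy : a*y + b*x ≤ x + y := by nlinarith [mul_le_mul_of_nonneg_right ha1 hy0, mul_le_mul_of_nonneg_right hb1 hx0]
  -- trivial case x+y = 0
  rcases eq_or_lt_of_le (by linarith : (0:ℝ) ≤ x + y) with hxy0 | hxy0
  · have hx' : x = 0 := by linarith
    have hy' : y = 0 := by linarith
    subst hx'; subst hy'
    simp [zero_pow (by omega : k ≠ 0)]
  -- k = 1
  rcases eq_or_lt_of_le hk with hk1 | hk2
  · have : k = 1 := hk1.symm
    subst this
    simp only [pow_one]
    have h2 : (y - x)*(x+y) ≤ (a*y - b*x)*(x+y) := by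
      calc (y - x)*(x+y) = (a*y - b*x)*(a*y + b*x) := hgeom
        _ ≤ (a*y - b*x)*(x+y) := mul_le_mul_of_nonneg_left habxy hs0
    have h3 : y - x ≤ a*y - b*x := le_of_mul_le_mul_right h2 hxy0
    nlinarith [h3]
  -- k = 2
  rcases eq_or_lt_of_le (show 2 ≤ k by omega) with hk2' | hk3
  · have : k = 2 := by omega
    subst this
    have hab1 : a*y + b*x ≤ 1 := by nlinarith [sq_nonneg (a-y), sq_nonneg (b-x)]
    have : y^2 - x^2 = (a*y - b*x)*(a*y + b*x) := by linear_combination hgeom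
    rw [this]
    calc (a*y - b*x)*(a*y + b*x) ≤ (a*y - b*x)*1 := mul_le_mul_of_nonneg_left hab1 hs0
      _ = 1 * (a*y - b*x) := by ring
      _ ≤ K * (a*y - b*x) := mul_le_mul_of_nonneg_right hK1 hs0
  -- now k >= 3
  have hk3' : 3 ≤ k := by omega
  set u : ℝ := y^(k-1) with hu
  have hu0 : 0 ≤ u := pow_nonneg hy0 _
  have hu1 : u ≤ 1 := pow_le_one₀ hy0 hy1
  have hyk : y^k = u * y := by
    rw [hu, ← pow_succ]
    congr 1
    omega
  have hcrude : y^k - x^k ≤ (k:ℝ) * u * (y - x) := by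
    have h' := sl1 x y hx0 hxy (k-1)
    have hke : k - 1 + 1 = k := by omega
    rw [hke] at h'
    have : ((k-1 : ℕ):ℝ) + 1 = (k:ℝ) := by
      have : (k - 1) + 1 = k := by omega
      exact_mod_cast congrArg (Nat.cast : ℕ → ℝ) this
    rw [this] at h'
    exact h'
  by_cases hC : K * u * (a*y + b*x) ≤ x + y
  · -- crude bound suffices
    have h1 : (y^k - x^k)*(x+y) ≤ ((k:ℝ) * u * (y - x))*(x+y) := by
      apply mul_le_mul_of_nonneg_right hcrude (by linarith)
    have h2 : ((k:ℝ) * u * (y - x))*(x+y) = (K*(a*y - b*x)) * (K * u * (a*y + b*x)) := by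
      have : (k:ℝ) = K^2 := hKk.symm
      rw [this]
      calc K^2*u*(y-x)*(x+y) = K^2*u*((y-x)*(x+y)) := by ring
        _ = K^2*u*((a*y - b*x)*(a*y + b*x)) := by rw [hgeom]
        _ = (K*(a*y - b*x)) * (K * u * (a*y + b*x)) := by ring
    have h3 : (K*(a*y - b*x)) * (K * u * (a*y + b*x)) ≤ (K*(a*y - b*x)) * (x+y) := by
      apply mul_le_mul_of_nonneg_left hC (mul_nonneg hK0 hs0)
    have h4 : (y^k - x^k)*(x+y) ≤ (K*(a*y - b*x))*(x+y) := by
      rw [h2] at h1; linarith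
    exact le_of_mul_le_mul_right h4 hxy0
  · push_neg at hC
    have hy0' : 0 < y := by
      rcases eq_or_lt_of_le hy0 with h|h
      · exfalso
        have hx' : x = 0 := by linarith
        have hy' : y = 0 := h.symm
        rw [hx', hy'] at hC
        simp at hC
      · exact h
    have hu0' : 0 < u := pow_pos hy0' _
    have hc0 : (0:ℝ) ≤ b^2 := sq_nonneg b
    have hc1 : b^2 ≤ 1 := by nlinarith
    have hyc : 1 - b^2 = y^2 := by linarith [hby]
    have hu2 : u^2 = (1-b^2)^(k-1) := by
      rw [hyc, hu, ← pow_mul, ← pow_mul, Nat.mul_comm]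
    have hF1 : 2*(K*u*b)^2 ≤ 1 := by
      have hf := f1 k hk3' (b^2) hc0 hc1
      have he : (K*u*b)^2 = (k:ℝ)*(b^2)*(1-b^2)^(k-1) := by
        rw [← hu2, ← hKk]; ring
      rw [he]
      linarith [hf]
    have hP1 : u^2*y^2 ≤ 1 - (K*u*b)^2 := by
      have hw := weier (b^2) hc0 hc1 (k-1)
      have hcast : ((k-1:ℕ):ℝ) = (k:ℝ) - 1 := by
        have h' : (k-1) + 1 = k := by omega
        have h'' := congrArg (Nat.cast : ℕ → ℝ) h'
        push_cast at h''
        linarith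
      rw [← hu2, hcast] at hw
      have hid : u^2*y^2 + (K*u*b)^2 = u^2*(1 + ((k:ℝ)-1)*b^2) := by
        rw [← hyc, ← hKk]; ring
      linarith [hw, hid]
    have huy2 : u ≤ y^2 := by
      rw [hu]
      apply pow_le_pow_of_le_one hy0 hy1 (by omega : 2 ≤ k - 1)
    have hmain := notC_case x y a b K u hx0 hxy hy1 hb0 hba ha1 hax hby hK0
      hu0' hu1 huy2 hy0' hF1 hP1 hC
    have hxk : 0 ≤ x^k := pow_nonneg hx0 k
    rw [hyk]
    linarith [hmain, hxk]


private lemma stmt13_aux (α β γ : ℝ) (hα : α ∈ Set.Icc 0 (π / 2)) (hβ : β ∈ Set.Icc 0 (π / 2))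
    (hγ : γ ∈ Set.Icc 0 (π / 2)) (hba : β ≤ α) (h1 : α - β ≤ γ)
    (k : ℕ) (hk : 1 ≤ k) :
    |Real.cos α ^ k - Real.cos β ^ k| ≤ Real.sqrt k * Real.sin γ := by
  obtain ⟨hα0, hα2⟩ := hα
  obtain ⟨hβ0, hβ2⟩ := hβ
  obtain ⟨hγ0, hγ2⟩ := hγ
  have hπ := Real.pi_pos
  have hca : 0 ≤ Real.cos α := Real.cos_nonneg_of_mem_Icc ⟨by linarith, hα2⟩
  have hxy : Real.cos α ≤ Real.cos β :=
    Real.cos_le_cos_of_nonneg_of_le_pi hβ0 (by linarith) hba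
  have hy1 : Real.cos β ≤ 1 := Real.cos_le_one β
  have hb0 : 0 ≤ Real.sin β := Real.sin_nonneg_of_nonneg_of_le_pi hβ0 (by linarith)
  have hba' : Real.sin β ≤ Real.sin α := by
    apply Real.strictMonoOn_sin.monotoneOn ⟨by linarith, by linarith⟩ ⟨by linarith, by linarith⟩ hba
  have ha1 : Real.sin α ≤ 1 := Real.sin_le_one α
  have hax : Real.sin α ^ 2 + Real.cos α ^ 2 = 1 := Real.sin_sq_add_cos_sq α
  have hby : Real.sin β ^ 2 + Real.cos β ^ 2 = 1 := Real.sin_sq_add_cos_sq β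
  set K := Real.sqrt k with hKdef
  have hK0 : 0 ≤ K := Real.sqrt_nonneg _
  have hKk : K^2 = (k:ℝ) := Real.sq_sqrt (by positivity)
  have hK1 : 1 ≤ K := by
    rw [hKdef]
    rw [show (1:ℝ) = Real.sqrt 1 from (Real.sqrt_one).symm]
    apply Real.sqrt_le_sqrt
    exact_mod_cast hk
  have hmain := main_alg k hk (Real.cos α) (Real.cos β) (Real.sin α) (Real.sin β) K
    hca hxy hy1 hb0 hba' ha1 hax hby hK0 hKk hK1
  have hδ : Real.sin α * Real.cos β - Real.sin β * Real.cos α = Real.sin (α - β) := by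
    rw [Real.sin_sub]; ring
  have hsin : Real.sin (α - β) ≤ Real.sin γ := by
    apply Real.strictMonoOn_sin.monotoneOn ⟨by linarith, by linarith⟩ ⟨by linarith, by linarith⟩ h1
  have hpk : Real.cos α ^ k ≤ Real.cos β ^ k := pow_le_pow_left₀ hca hxy k
  rw [abs_sub_comm, abs_of_nonneg (by linarith : (0:ℝ) ≤ Real.cos β ^ k - Real.cos α ^ k)]
  calc Real.cos β ^ k - Real.cos α ^ k
      ≤ K * (Real.sin α * Real.cos β - Real.sin β * Real.cos α) := hmain
    _ = K * Real.sin (α - β) := by rw [hδ]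
    _ ≤ K * Real.sin γ := mul_le_mul_of_nonneg_left hsin hK0

theorem stmt13 (α β γ : ℝ) (hα : α ∈ Set.Icc 0 (π / 2)) (hβ : β ∈ Set.Icc 0 (π / 2))
    (hγ : γ ∈ Set.Icc 0 (π / 2)) (h1 : |α - β| ≤ γ) (h2 : γ ≤ α + β)
    (k : ℕ) (hk : 1 ≤ k) :
    |Real.cos α ^ k - Real.cos β ^ k| ≤ Real.sqrt k * Real.sin γ := by
  rcases le_total β α with h | h
  · exact stmt13_aux α β γ hα hβ hγ h ((le_abs_self _).trans h1) k hk
  · rw [abs_sub_comm]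
    apply stmt13_aux β α γ hβ hα hγ h _ k hk
    calc β - α ≤ |β - α| := le_abs_self _
      _ = |α - β| := abs_sub_comm β α
      _ ≤ γ := h1
end

section
/- Let l be a real number and let L = [l, ∞) (respectively L = (l, ∞)). Suppose f is a real-valued function that is nonnegative on L, i.e., f(x) ≥ 0 for all x ∈ L, and mid-point concave on L, i.e., f((x+y)/2) ≥ (f(x)+f(y))/2 for all x, y ∈ L. Then f is monotonically nondecreasing on L: f(x) ≥ f(y) whenever x, y ∈ L and x > y. -/
theorem stmt15 (l : ℝ) (L : Set ℝ) (hL : L = Set.Ici l ∨ L = Set.Ioi l)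
    (f : ℝ → ℝ) (hnonneg : ∀ x ∈ L, 0 ≤ f x)
    (hconc : ∀ x ∈ L, ∀ y ∈ L, (f x + f y) / 2 ≤ f ((x + y) / 2)) :
    ∀ x ∈ L, ∀ y ∈ L, y < x → f y ≤ f x := by
  have hup : ∀ a ∈ L, ∀ b : ℝ, a ≤ b → b ∈ L := by
    rcases hL with rfl | rfl
    · intro a ha b hab; exact le_trans ha hab
    · intro a ha b hab; exact lt_of_lt_of_le ha hab
  intro x hx y hy hyx
  set w : ℕ → ℝ := fun n => y + 2 ^ n * (x - y) with hw
  have hwmem : ∀ n, w n ∈ L := by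
    intro n
    apply hup x hx
    simp only [hw]
    nlinarith [one_le_pow₀ (by norm_num : (1:ℝ) ≤ 2) (n := n)]
  have key : ∀ n : ℕ, (1 - (1/2) ^ n) * f y + (1/2) ^ n * f (w n) ≤ f x := by
    intro n
    induction n with
    | zero => simp [hw]
    | succ n ih =>
      have hmid : (y + w (n+1)) / 2 = w n := by
        simp only [hw]; ring
      have h1 := hconc y hy (w (n+1)) (hwmem (n+1))
      rw [hmid] at h1
      have hp : ((1:ℝ)/2) ^ (n+1) = (1/2) ^ n / 2 := by ring
      have h2 := mul_le_mul_of_nonneg_left h1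
        (le_of_lt (pow_pos (by norm_num : (0:ℝ) < (1/2:ℝ)) n))
      rw [hp]
      nlinarith [h2]
  have key2 : ∀ n : ℕ, (1 - (1/2) ^ n) * f y ≤ f x := by
    intro n
    have := hnonneg (w n) (hwmem n)
    nlinarith [key n, pow_pos (by norm_num : (0:ℝ) < (1/2:ℝ)) n]
  have htend : Filter.Tendsto (fun n : ℕ => (1 - (1/2:ℝ) ^ n) * f y) Filter.atTop
      (nhds (f y)) := by
    have : Filter.Tendsto (fun n : ℕ => ((1/2:ℝ)) ^ n) Filter.atTop (nhds 0) :=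
      tendsto_pow_atTop_nhds_zero_of_lt_one (by norm_num) (by norm_num)
    have h3 : Filter.Tendsto (fun n : ℕ => (1 - (1/2:ℝ) ^ n) * f y) Filter.atTop
        (nhds ((1 - 0) * f y)) :=
      (Filter.Tendsto.sub tendsto_const_nhds this).mul tendsto_const_nhds
    simpa using h3
  exact le_of_tendsto htend (Filter.Eventually.of_forall key2)
end

section
/- Let a, b, c be real numbers such that the 3×3 matrix B = [[1,a,b],[a,1,c],[b,c,1]] is positive semidefinite. Then for every real number k ≥ 2, (1 − |a|^k)^{1/k} ≤ (1 − |b|^k)^{1/k} + (1 − |c|^k)^{1/k}. -/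
set_option maxHeartbeats 1000000

open Real

lemma slope_lem (m : ℝ) (hm : 1 ≤ m) {z Z : ℝ} (hz : 0 ≤ z) (hzZ : z ≤ Z) (hZ1 : Z ≤ 1)
    (hZ0 : 0 < Z) : z * (1 - (1 - Z) ^ m) ≤ Z * (1 - (1 - z) ^ m) := by
  have hconv := convexOn_rpow hm
  have hmem1 : (1 - Z) ∈ Set.Ici (0:ℝ) := by simp; linarith
  have hmem2 : (1:ℝ) ∈ Set.Ici (0:ℝ) := by simp
  have hl : 0 ≤ z / Z := div_nonneg hz hZ0.le
  have hl2 : 0 ≤ 1 - z / Z := by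
    have : z / Z ≤ 1 := (div_le_one hZ0).2 hzZ
    linarith
  have hsum : z / Z + (1 - z / Z) = 1 := by ring
  have hkey := hconv.2 hmem1 hmem2 hl hl2 hsum
  simp only [smul_eq_mul, Real.one_rpow, mul_one] at hkey
  have hcomb : z / Z * (1 - Z) + (1 - z / Z) = 1 - z := by field_simp; ring
  rw [hcomb] at hkey
  have h2 : Z * ((1 - z) ^ m) ≤ z * (1 - Z)^m + Z - z := by
    calc Z * ((1-z)^m) ≤ Z * (z / Z * (1 - Z) ^ m + (1 - z / Z)) :=
          mul_le_mul_of_nonneg_left hkey hZ0.le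
      _ = z * (1-Z)^m + Z - z := by field_simp; ring
  nlinarith

noncomputable def psi (m z : ℝ) : ℝ := Real.sqrt (1 - (1 - z^2)^m)

lemma psi_inner_nonneg (m : ℝ) (hm : 0 ≤ m) {z : ℝ} (hz1 : z ≤ 1) (hz0 : 0 ≤ z) :
    0 ≤ 1 - (1 - z^2)^m := by
  have h1 : (1 - z^2)^m ≤ 1 := Real.rpow_le_one (by nlinarith) (by nlinarith) hm
  linarith

lemma psi_mono (m : ℝ) (hm : 0 ≤ m) {x y : ℝ} (hx : 0 ≤ x) (hxy : x ≤ y) (hy1 : y ≤ 1) :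
    psi m x ≤ psi m y := by
  apply Real.sqrt_le_sqrt
  have : (1 - y^2)^m ≤ (1 - x^2)^m :=
    Real.rpow_le_rpow (by nlinarith) (by nlinarith) hm
  linarith

lemma psi_subadd (m : ℝ) (hm : 1 ≤ m) {x y : ℝ} (hx : 0 ≤ x) (hy : 0 ≤ y)
    (hxy : x + y ≤ 1) : psi m (x + y) ≤ psi m x + psi m y := by
  have hm0 : (0:ℝ) ≤ m := by linarith
  rcases eq_or_lt_of_le hx with hx0 | hx0
  · have : x = 0 := hx0.symm
    subst this
    simp [psi, Real.one_rpow]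
  rcases eq_or_lt_of_le hy with hy0 | hy0
  · have : y = 0 := hy0.symm
    subst this
    simp [psi, Real.one_rpow]
  set S := x + y with hS
  have hS0 : 0 < S := by positivity
  have key : ∀ w : ℝ, 0 < w → w ≤ S → w * psi m S ≤ S * psi m w := by
    intro w hw0 hwS
    have h := slope_lem m hm (z := w^2) (Z := S^2) (by positivity)
      (by nlinarith) (by nlinarith) (by positivity)
    have h2 : Real.sqrt (w^2 * (1 - (1 - S^2)^m)) ≤ Real.sqrt (S^2 * (1 - (1 - w^2)^m)) :=
      Real.sqrt_le_sqrt h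
    rwa [Real.sqrt_mul (by positivity), Real.sqrt_mul (by positivity),
      Real.sqrt_sq hw0.le, Real.sqrt_sq hS0.le] at h2
  have k1 := key x hx0 (by linarith)
  have k2 := key y hy0 (by linarith)
  have hsum : S * psi m S ≤ S * (psi m x + psi m y) := by
    have hS' : x * psi m S + y * psi m S = S * psi m S := by ring
    nlinarith
  exact le_of_mul_le_mul_left hsum hS0

lemma sq_rpow_eq {x : ℝ} (hx : 0 ≤ x) (m : ℝ) : ((x^2) : ℝ) ^ m = x ^ (2*m) := by
  rw [← Real.rpow_natCast x 2, ← Real.rpow_mul hx]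
  norm_num

lemma rpow_le_sq {q k : ℝ} (hq0 : 0 ≤ q) (hq1 : q ≤ 1) (hk : 2 ≤ k) : q ^ k ≤ q ^ 2 := by
  rcases eq_or_lt_of_le hq0 with h | h
  · rw [← h, Real.zero_rpow (by linarith : k ≠ 0)]
    norm_num
  · calc q ^ k ≤ q ^ (2:ℝ) := Real.rpow_le_rpow_of_exponent_ge h hq1 hk
      _ = q ^ 2 := by rw [← Real.rpow_natCast q 2]; norm_num

lemma real_add_rpow_le {x y p : ℝ} (hx : 0 ≤ x) (hy : 0 ≤ y) (hp : 0 ≤ p) (hp1 : p ≤ 1) :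
    (x + y) ^ p ≤ x ^ p + y ^ p := by
  have h := NNReal.rpow_add_le_add_rpow (Real.toNNReal x) (Real.toNNReal y) hp hp1
  have h' := (NNReal.coe_le_coe).2 h
  push_cast at h'
  rwa [Real.coe_toNNReal x hx, Real.coe_toNNReal y hy] at h'


lemma sqrt_step (k : ℝ) (hk : 2 ≤ k) {p q r : ℝ} (hp0 : 0 ≤ p) (hp1 : p ≤ 1)
    (hq0 : 0 ≤ q) (hq1 : q ≤ 1) (hr0 : 0 ≤ r) (hr1 : r ≤ 1)
    (key : (p - q*r)^2 ≤ (1-q^2)*(1-r^2)) :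
    Real.sqrt (1 - p^k) ≤ Real.sqrt (1 - q^k) + Real.sqrt (1 - r^k) := by
  have hk0 : (0:ℝ) < k := by linarith
  set m := k/2 with hmdef
  have hm1 : 1 ≤ m := by rw [hmdef]; linarith
  have hm0 : (0:ℝ) ≤ m := by linarith
  have h2m : 2*m = k := by rw [hmdef]; ring
  have hpk1 : p ^ k ≤ 1 := Real.rpow_le_one hp0 hp1 hk0.le
  have hqk1 : q ^ k ≤ 1 := Real.rpow_le_one hq0 hq1 hk0.le
  have hrk1 : r ^ k ≤ 1 := Real.rpow_le_one hr0 hr1 hk0.le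
  have hpk0 : 0 ≤ p ^ k := Real.rpow_nonneg hp0 k
  have hqk0 : 0 ≤ q ^ k := Real.rpow_nonneg hq0 k
  have hrk0 : 0 ≤ r ^ k := Real.rpow_nonneg hr0 k
  by_cases hc : q^2 + r^2 ≤ 1
  · have l1 : Real.sqrt (1 - p^k) ≤ 1 := Real.sqrt_le_one.2 (by linarith)
    have l2 : 1 - q^2 ≤ Real.sqrt (1 - q^k) := by
      rw [Real.le_sqrt (by nlinarith) (by linarith)]
      have := rpow_le_sq hq0 hq1 hk
      nlinarith
    have l3 : 1 - r^2 ≤ Real.sqrt (1 - r^k) := by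
      rw [Real.le_sqrt (by nlinarith) (by linarith)]
      have := rpow_le_sq hr0 hr1 hk
      nlinarith
    linarith
  · push_neg at hc
    set s := Real.sqrt (1 - q^2) with hsdef
    set t := Real.sqrt (1 - r^2) with htdef
    have hs0 : 0 ≤ s := Real.sqrt_nonneg _
    have ht0 : 0 ≤ t := Real.sqrt_nonneg _
    have hs2 : s^2 = 1 - q^2 := Real.sq_sqrt (by nlinarith)
    have ht2 : t^2 = 1 - r^2 := Real.sq_sqrt (by nlinarith)
    have hs1 : s ≤ 1 := Real.sqrt_le_one.2 (by nlinarith)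
    have ht1 : t ≤ 1 := Real.sqrt_le_one.2 (by nlinarith)
    have hst2 : (s*t)^2 = (1-q^2)*(1-r^2) := by rw [mul_pow, hs2, ht2]
    have hst : s * t ≤ q * r := by
      have h' : (s*t)^2 ≤ (q*r)^2 := by rw [hst2]; nlinarith
      exact (pow_le_pow_iff_left₀ (by positivity) (by positivity) two_ne_zero).1 h'
    set u := q*r - s*t with hudef
    have hu0 : 0 ≤ u := by rw [hudef]; linarith
    have hpu : u ≤ p := by
      have key2 : (p - q*r)^2 ≤ (s*t)^2 := by rw [hst2]; exact key
      have habs := abs_le_of_sq_le_sq' key2 (by positivity) |>.1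
      rw [hudef]
      linarith
    have hqr1 : q * r ≤ 1 := mul_le_one₀ hq1 hr0 hr1
    have hu1 : u ≤ 1 := by rw [hudef]; nlinarith
    set σ := q*t + r*s with hσdef
    have hσ0 : 0 ≤ σ := by positivity
    have hσ2 : σ^2 = 1 - u^2 := by
      rw [hσdef, hudef]
      linear_combination (r^2 + t^2) * hs2 + ht2
    have hσ1 : σ ≤ 1 := by nlinarith [hσ2, sq_nonneg u, hσ0]
    have huk : u ^ k ≤ p ^ k := Real.rpow_le_rpow hu0 hpu hk0.le
    have e1 : psi m σ = Real.sqrt (1 - u^k) := by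
      rw [psi, hσ2]
      have h' : (1 - (1 - u^2)) = u^2 := by ring
      rw [h', sq_rpow_eq hu0, h2m]
    have e2 : psi m t = Real.sqrt (1 - r^k) := by
      rw [psi]
      have h' : (1 - t^2) = r^2 := by rw [ht2]; ring
      rw [h', sq_rpow_eq hr0, h2m]
    have e3 : psi m s = Real.sqrt (1 - q^k) := by
      rw [psi]
      have h' : (1 - s^2) = q^2 := by rw [hs2]; ring
      rw [h', sq_rpow_eq hq0, h2m]
    have c1 : Real.sqrt (1 - p^k) ≤ Real.sqrt (1 - u^k) := by
      apply Real.sqrt_le_sqrt; linarith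
    have c2 : psi m σ ≤ psi m (q*t) + psi m (r*s) := by
      have h' := psi_subadd m hm1 (x := q*t) (y := r*s)
        (mul_nonneg hq0 ht0) (mul_nonneg hr0 hs0) (by rw [hσdef] at hσ1; linarith)
      rwa [hσdef]
    have c3 : psi m (q*t) ≤ psi m t :=
      psi_mono m hm0 (mul_nonneg hq0 ht0) (mul_le_of_le_one_left ht0 hq1) ht1
    have c4 : psi m (r*s) ≤ psi m s :=
      psi_mono m hm0 (mul_nonneg hr0 hs0) (mul_le_of_le_one_left hs0 hr1) hs1
    rw [e2] at c3
    rw [e3] at c4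
    rw [e1] at c2
    linarith

lemma final_step (k : ℝ) (hk : 2 ≤ k) {p q r : ℝ} (hp0 : 0 ≤ p) (hp1 : p ≤ 1)
    (hq0 : 0 ≤ q) (hq1 : q ≤ 1) (hr0 : 0 ≤ r) (hr1 : r ≤ 1)
    (key : (p - q*r)^2 ≤ (1-q^2)*(1-r^2)) :
    (1 - p^k) ^ (1/k) ≤ (1 - q^k) ^ (1/k) + (1 - r^k) ^ (1/k) := by
  have hk0 : (0:ℝ) < k := by linarith
  have sqW := sqrt_step k hk hp0 hp1 hq0 hq1 hr0 hr1 key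
  have hWnn : 0 ≤ 1 - p^k := by
    have := Real.rpow_le_one hp0 hp1 hk0.le; linarith
  have hXnn : 0 ≤ 1 - q^k := by
    have := Real.rpow_le_one hq0 hq1 hk0.le; linarith
  have hYnn : 0 ≤ 1 - r^k := by
    have := Real.rpow_le_one hr0 hr1 hk0.le; linarith
  set X := (1 : ℝ) - q^k
  set Y := (1 : ℝ) - r^k
  have hsq : 1 - p^k ≤ (Real.sqrt X + Real.sqrt Y)^2 := by
    have h := pow_le_pow_left₀ (Real.sqrt_nonneg (1 - p^k)) sqW 2
    rwa [Real.sq_sqrt hWnn] at h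
  have step1 : (1 - p^k) ^ (1/k) ≤ ((Real.sqrt X + Real.sqrt Y)^2) ^ (1/k) :=
    Real.rpow_le_rpow hWnn hsq (by positivity)
  have step2 : ((Real.sqrt X + Real.sqrt Y)^2) ^ (1/k) = (Real.sqrt X + Real.sqrt Y) ^ (2/k) := by
    rw [← Real.rpow_natCast (Real.sqrt X + Real.sqrt Y) 2, ← Real.rpow_mul (by positivity)]
    norm_num [div_eq_mul_inv]
  have step3 : (Real.sqrt X + Real.sqrt Y) ^ (2/k) ≤ (Real.sqrt X) ^ (2/k) + (Real.sqrt Y) ^ (2/k) :=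
    real_add_rpow_le (Real.sqrt_nonneg _) (Real.sqrt_nonneg _) (by positivity)
      (by rw [div_le_one hk0]; linarith)
  have e4 : (Real.sqrt X) ^ (2/k) = X ^ (1/k) := by
    rw [Real.sqrt_eq_rpow, ← Real.rpow_mul hXnn]
    congr 1
    field_simp
  have e5 : (Real.sqrt Y) ^ (2/k) = Y ^ (1/k) := by
    rw [Real.sqrt_eq_rpow, ← Real.rpow_mul hYnn]
    congr 1
    field_simp
  calc (1 - p^k) ^ (1/k) ≤ ((Real.sqrt X + Real.sqrt Y)^2) ^ (1/k) := step1
    _ = (Real.sqrt X + Real.sqrt Y) ^ (2/k) := step2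
    _ ≤ (Real.sqrt X) ^ (2/k) + (Real.sqrt Y) ^ (2/k) := step3
    _ = X ^ (1/k) + Y ^ (1/k) := by rw [e4, e5]

theorem stmt16 (a b c : ℝ)
    (hB : Matrix.PosSemidef !![1, a, b; a, 1, c; b, c, 1])
    (k : ℝ) (hk : 2 ≤ k) :
    (1 - |a| ^ k) ^ (1 / k) ≤ (1 - |b| ^ k) ^ (1 / k) + (1 - |c| ^ k) ^ (1 / k) := by
  have h1 := hB.dotProduct_mulVec_nonneg ![1, 1, 0]
  have h2 := hB.dotProduct_mulVec_nonneg ![1, -1, 0]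
  have h3 := hB.dotProduct_mulVec_nonneg ![1, 0, 1]
  have h4 := hB.dotProduct_mulVec_nonneg ![1, 0, -1]
  have h5 := hB.dotProduct_mulVec_nonneg ![0, 1, 1]
  have h6 := hB.dotProduct_mulVec_nonneg ![0, 1, -1]
  have hdet : (0:ℝ) ≤ (!![1, a, b; a, 1, c; b, c, 1]).det := by
    rw [hB.1.det_eq_prod_eigenvalues]
    exact Finset.prod_nonneg fun i _ => hB.eigenvalues_nonneg i
  simp [Matrix.det_fin_three] at hdet
  simp [Matrix.mulVec, dotProduct, Fin.sum_univ_three] at h1 h2 h3 h4 h5 h6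
  set p := |a| with hpdef
  set q := |b| with hqdef
  set r := |c| with hrdef
  have hp1 : p ≤ 1 := abs_le.2 ⟨by nlinarith, by nlinarith⟩
  have hq1 : q ≤ 1 := abs_le.2 ⟨by nlinarith, by nlinarith⟩
  have hr1 : r ≤ 1 := abs_le.2 ⟨by nlinarith, by nlinarith⟩
  have key : (p - q*r)^2 ≤ (1-q^2)*(1-r^2) := by
    have e1 : (a - b*c)^2 ≤ (1-b^2)*(1-c^2) := by nlinarith [hdet]
    have e2 : |p - q*r| ≤ |a - b*c| := by
      rw [abs_le]
      constructor
      · have h' := abs_sub_abs_le_abs_sub (b*c) a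
        rw [abs_sub_comm, abs_mul] at h'
        rw [hpdef, hqdef, hrdef]
        linarith
      · have h' := abs_sub_abs_le_abs_sub a (b*c)
        rw [abs_mul] at h'
        rw [hpdef, hqdef, hrdef]
        linarith
    calc (p - q*r)^2 = |p - q*r|^2 := (sq_abs _).symm
      _ ≤ |a - b*c|^2 := pow_le_pow_left₀ (abs_nonneg _) e2 2
      _ = (a - b*c)^2 := sq_abs _
      _ ≤ (1-b^2)*(1-c^2) := e1
      _ = (1-q^2)*(1-r^2) := by rw [hqdef, hrdef, sq_abs, sq_abs]
  exact final_step k hk (abs_nonneg a) hp1 (abs_nonneg b) hq1 (abs_nonneg c) hr1 key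
end

section
/- Let u, v, w be unit vectors in a complex inner product space. Then for every real number k ≥ 2, (1 − |⟨u,v⟩|^k)^{1/k} ≤ (1 − |⟨u,w⟩|^k)^{1/k} + (1 − |⟨w,v⟩|^k)^{1/k}. -/
open Real

lemma key_ineq_s17 {k θ : ℝ} (hk : 2 ≤ k) (h0 : 0 < θ) (h2 : θ < π/2) :
    θ * (cos θ ^ (k-1) * sin θ) ≤ 1 - cos θ ^ k := by
  have hc0 : 0 < cos θ := Real.cos_pos_of_mem_Ioo ⟨by linarith [pi_pos], h2⟩
  have hc1 : cos θ ≤ 1 := Real.cos_le_one θ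
  have hs0 : 0 < sin θ := Real.sin_pos_of_pos_of_lt_pi h0 (by linarith [pi_pos])
  have htan : θ * cos θ ≤ sin θ := by
    have h := Real.lt_tan h0 h2
    rw [Real.tan_eq_sin_div_cos] at h
    exact (le_div_iff₀ hc0).mp h.le
  have e1 : cos θ ^ (k-1) = cos θ ^ (k-2) * cos θ := by
    rw [← Real.rpow_add_one hc0.ne' (k-2)]; ring_nf
  have e2 : cos θ ^ k = cos θ ^ (k-2) * (cos θ * cos θ) := by
    have : cos θ * cos θ = cos θ ^ (2:ℝ) := by
      rw [Real.rpow_two]; ring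
    rw [this, ← Real.rpow_add hc0 (k-2) 2]; ring_nf
  have hck2 : cos θ ^ (k-2) ≤ 1 := Real.rpow_le_one hc0.le hc1 (by linarith)
  have hck2' : 0 < cos θ ^ (k-2) := Real.rpow_pos_of_pos hc0 _
  have hpyth : sin θ * sin θ = 1 - cos θ * cos θ := by
    nlinarith [Real.sin_sq_add_cos_sq θ]
  rw [e1, e2]
  nlinarith [htan, hs0, hck2, hck2', hc0, mul_le_mul_of_nonneg_left htan hck2'.le]

lemma F_antitone {k : ℝ} (hk : 2 ≤ k) :
    AntitoneOn (fun θ : ℝ => (1 - cos θ ^ k) / θ ^ k) (Set.Ioc 0 (π/2)) := by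
  have hk0 : (0:ℝ) < k := by linarith
  have hint : interior (Set.Ioc (0:ℝ) (π/2)) = Set.Ioo 0 (π/2) := interior_Ioc
  have hderiv : ∀ x ∈ Set.Ioo (0:ℝ) (π/2),
      HasDerivAt (fun θ : ℝ => (1 - cos θ ^ k) / θ ^ k)
        (((k * cos x ^ (k-1) * sin x) * x ^ k - (1 - cos x ^ k) * (k * x ^ (k-1))) / (x ^ k) ^ 2) x := by
    intro x hx
    have hc0 : 0 < cos x := Real.cos_pos_of_mem_Ioo ⟨by linarith [pi_pos, hx.1], hx.2⟩
    have hnum : HasDerivAt (fun θ : ℝ => 1 - cos θ ^ k) (k * cos x ^ (k-1) * sin x) x := by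
      have h1 : HasDerivAt (fun θ : ℝ => cos θ ^ k) (k * cos x ^ (k-1) * (-sin x)) x :=
        (Real.hasDerivAt_rpow_const (p := k) (Or.inl hc0.ne')).comp x (Real.hasDerivAt_cos x)
      have h2 := (hasDerivAt_const x (1:ℝ)).sub h1
      rw [show k * cos x ^ (k-1) * sin x = 0 - k * cos x ^ (k-1) * -sin x by ring]; exact h2
    have hden : HasDerivAt (fun θ : ℝ => θ ^ k) (k * x ^ (k-1)) x :=
      Real.hasDerivAt_rpow_const (Or.inl hx.1.ne')
    exact hnum.div hden (Real.rpow_pos_of_pos hx.1 k).ne'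
  apply antitoneOn_of_deriv_nonpos (convex_Ioc 0 (π/2))
  · -- continuity
    intro x hx
    have hx0 : (0:ℝ) < x := hx.1
    have h1 : ContinuousAt (fun θ : ℝ => 1 - cos θ ^ k) x := by
      have := (Real.continuousAt_rpow_const (cos x) k (Or.inr hk0.le)).comp
        (Real.continuous_cos.continuousAt (x := x))
      exact (continuousAt_const.sub this)
    have h2 : ContinuousAt (fun θ : ℝ => θ ^ k) x :=
      Real.continuousAt_rpow_const x k (Or.inr hk0.le)
    exact ((h1.div h2 (Real.rpow_pos_of_pos hx0 k).ne').continuousWithinAt)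
  · rw [hint]
    intro x hx
    exact ((hderiv x hx).differentiableAt).differentiableWithinAt
  · rw [hint]
    intro x hx
    rw [(hderiv x hx).deriv]
    apply div_nonpos_of_nonpos_of_nonneg _ (sq_nonneg _)
    have key := key_ineq_s17 hk hx.1 hx.2
    have hxk1 : (0:ℝ) ≤ k * x ^ (k-1) := mul_nonneg hk0.le (Real.rpow_nonneg hx.1.le _)
    have hmul := mul_le_mul_of_nonneg_left key hxk1
    have hxx : x ^ (k-1) * x = x ^ k := by
      rw [← Real.rpow_add_one hx.1.ne' (k-1)]; ring_nf
    rw [← hxx]; nlinarith [hmul]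

lemma ratio_le {k α s : ℝ} (hk : 2 ≤ k) (hα : 0 < α) (hαs : α ≤ s) (hs : s ≤ π/2) :
    (1 - cos s ^ k) ^ (1/k) * α ≤ (1 - cos α ^ k) ^ (1/k) * s := by
  have hk0 : (0:ℝ) < k := by linarith
  have hs0 : 0 < s := lt_of_lt_of_le hα hαs
  have hcs : 0 ≤ cos s := Real.cos_nonneg_of_mem_Icc ⟨by linarith [pi_pos], hs⟩
  have hcα : 0 ≤ cos α := Real.cos_nonneg_of_mem_Icc ⟨by linarith [pi_pos], le_trans hαs hs⟩
  have hns : 0 ≤ 1 - cos s ^ k := by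
    have := Real.rpow_le_one hcs (Real.cos_le_one s) hk0.le; linarith
  have hnα : 0 ≤ 1 - cos α ^ k := by
    have := Real.rpow_le_one hcα (Real.cos_le_one α) hk0.le; linarith
  have hF := F_antitone hk (Set.mem_Ioc.mpr ⟨hα, le_trans hαs hs⟩)
    (Set.mem_Ioc.mpr ⟨hs0, hs⟩) hαs
  have hmono := Real.rpow_le_rpow (div_nonneg hns (Real.rpow_nonneg hs0.le k)) hF (one_div_nonneg.mpr hk0.le)
  rw [Real.div_rpow hns (Real.rpow_nonneg hs0.le k),
      Real.div_rpow hnα (Real.rpow_nonneg hα.le k)] at hmono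
  rw [one_div, Real.rpow_rpow_inv hs0.le hk0.ne', Real.rpow_rpow_inv hα.le hk0.ne'] at hmono
  rw [div_le_div_iff₀ hs0 hα] at hmono
  rw [one_div]
  linarith

lemma g_mono {k x y : ℝ} (hk : 2 ≤ k) (hx : 0 ≤ x) (hxy : x ≤ y) (hy : y ≤ π/2) :
    (1 - cos x ^ k) ^ (1/k) ≤ (1 - cos y ^ k) ^ (1/k) := by
  have hk0 : (0:ℝ) < k := by linarith
  have hcy : 0 ≤ cos y := Real.cos_nonneg_of_mem_Icc ⟨by linarith [pi_pos], hy⟩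
  have hcc : cos y ≤ cos x := Real.cos_le_cos_of_nonneg_of_le_pi hx (by linarith [pi_pos]) hxy
  have h1 : cos y ^ k ≤ cos x ^ k := Real.rpow_le_rpow hcy hcc hk0.le
  have h2 : cos x ^ k ≤ 1 :=
    Real.rpow_le_one (le_trans hcy hcc) (Real.cos_le_one x) hk0.le
  exact Real.rpow_le_rpow (by linarith) (by linarith) (one_div_nonneg.mpr hk0.le)

lemma g_subadd {k α β s : ℝ} (hk : 2 ≤ k) (hα0 : 0 ≤ α) (hβ0 : 0 ≤ β)
    (hαπ : α ≤ π/2) (hβπ : β ≤ π/2) (hs0 : 0 ≤ s) (hsπ : s ≤ π/2) (hsum : s ≤ α + β) :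
    (1 - cos s ^ k) ^ (1/k) ≤ (1 - cos α ^ k) ^ (1/k) + (1 - cos β ^ k) ^ (1/k) := by
  have hk0 : (0:ℝ) < k := by linarith
  have hgβ : (0:ℝ) ≤ (1 - cos β ^ k) ^ (1/k) := Real.rpow_nonneg (by
    have hcβ : 0 ≤ cos β := Real.cos_nonneg_of_mem_Icc ⟨by linarith [pi_pos], hβπ⟩
    have := Real.rpow_le_one hcβ (Real.cos_le_one β) hk0.le
    linarith) _
  have hgα : (0:ℝ) ≤ (1 - cos α ^ k) ^ (1/k) := Real.rpow_nonneg (by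
    have hcα : 0 ≤ cos α := Real.cos_nonneg_of_mem_Icc ⟨by linarith [pi_pos], hαπ⟩
    have := Real.rpow_le_one hcα (Real.cos_le_one α) hk0.le
    linarith) _
  by_cases hsa : s ≤ α
  · have := g_mono hk hs0 hsa hαπ
    linarith
  push_neg at hsa
  rcases eq_or_lt_of_le hα0 with hα | hα
  · -- α = 0
    have : (1 - cos s ^ k) ^ (1/k) ≤ (1 - cos β ^ k) ^ (1/k) :=
      g_mono hk hs0 (by linarith) hβπ
    linarith
  · have hs0' : 0 < s := lt_trans hα hsa
    have h1 : (1 - cos s ^ k) ^ (1/k) * α ≤ (1 - cos α ^ k) ^ (1/k) * s :=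
      ratio_le hk hα hsa.le hsπ
    have h2 : (1 - cos s ^ k) ^ (1/k) * (s - α) ≤ (1 - cos (s-α) ^ k) ^ (1/k) * s :=
      ratio_le hk (by linarith) (by linarith) hsπ
    have h3 : (1 - cos (s-α) ^ k) ^ (1/k) ≤ (1 - cos β ^ k) ^ (1/k) :=
      g_mono hk (by linarith) (by linarith) hβπ
    have h4 : (1 - cos s ^ k) ^ (1/k) * s ≤
        ((1 - cos α ^ k) ^ (1/k) + (1 - cos (s-α) ^ k) ^ (1/k)) * s := by nlinarith
    have := (mul_le_mul_iff_of_pos_right hs0').mp h4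
    linarith

lemma scalar_lemma {k a b c : ℝ} (hk : 2 ≤ k) (ha0 : 0 ≤ a) (ha1 : a ≤ 1)
    (hb0 : 0 ≤ b) (hb1 : b ≤ 1) (hc0 : 0 ≤ c) (hc1 : c ≤ 1)
    (h : a * b ≤ c + Real.sqrt (1 - a^2) * Real.sqrt (1 - b^2)) :
    (1 - c ^ k) ^ (1/k) ≤ (1 - a ^ k) ^ (1/k) + (1 - b ^ k) ^ (1/k) := by
  have hk0 : (0:ℝ) < k := by linarith
  set α := Real.arccos a with hαdef
  set β := Real.arccos b with hβdef
  have hcα : cos α = a := Real.cos_arccos (by linarith) ha1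
  have hcβ : cos β = b := Real.cos_arccos (by linarith) hb1
  have hsα : sin α = Real.sqrt (1 - a^2) := Real.sin_arccos a
  have hsβ : sin β = Real.sqrt (1 - b^2) := Real.sin_arccos b
  have hα0 : 0 ≤ α := Real.arccos_nonneg a
  have hβ0 : 0 ≤ β := Real.arccos_nonneg b
  have hαπ : α ≤ π/2 := Real.arccos_le_pi_div_two.mpr ha0
  have hβπ : β ≤ π/2 := Real.arccos_le_pi_div_two.mpr hb0
  set s := min (α + β) (π/2) with hsdef
  have hs0 : 0 ≤ s := le_min (by linarith) (by linarith [pi_pos])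
  have hsπ : s ≤ π/2 := min_le_right _ _
  have hss : s ≤ α + β := min_le_left _ _
  have hcs0 : 0 ≤ cos s := Real.cos_nonneg_of_mem_Icc ⟨by linarith [pi_pos], hsπ⟩
  have hcsc : cos s ≤ c := by
    rcases le_or_gt (α + β) (π/2) with hle | hlt
    · have : s = α + β := min_eq_left hle
      rw [this, Real.cos_add, hcα, hcβ, hsα, hsβ]
      linarith
    · have : s = π/2 := min_eq_right hlt.le
      rw [this, Real.cos_pi_div_two]
      exact hc0
  have h2 : (1 - c ^ k) ^ (1/k) ≤ (1 - cos s ^ k) ^ (1/k) := by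
    have hck : cos s ^ k ≤ c ^ k := Real.rpow_le_rpow hcs0 hcsc hk0.le
    have hck1 : c ^ k ≤ 1 := Real.rpow_le_one hc0 hc1 hk0.le
    exact Real.rpow_le_rpow (by linarith) (by linarith) (one_div_nonneg.mpr hk0.le)
  have h3 := g_subadd hk hα0 hβ0 hαπ hβπ hs0 hsπ hss
  rw [hcα, hcβ] at h3
  linarith

lemma abs_sq_c (z : ℂ) : ((‖z‖ : ℂ))^2 = (starRingEnd ℂ) z * z := by
  rw [mul_comm, Complex.mul_conj, Complex.normSq_eq_norm_sq]; push_cast; ring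

lemma inner_triangle {V : Type*} [NormedAddCommGroup V] [InnerProductSpace ℂ V]
    (u v w : V) (hu : ‖u‖ = 1) (hv : ‖v‖ = 1) (hw : ‖w‖ = 1) :
    ‖(inner ℂ u w : ℂ)‖ * ‖(inner ℂ w v : ℂ)‖ ≤
      ‖(inner ℂ u v : ℂ)‖ +
      Real.sqrt (1 - ‖(inner ℂ u w : ℂ)‖^2) *
      Real.sqrt (1 - ‖(inner ℂ w v : ℂ)‖^2) := by
  have hww : (inner ℂ w w : ℂ) = 1 := by
    rw [inner_self_eq_norm_sq_to_K, hw]; norm_num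
  set u' := u - (inner ℂ w u : ℂ) • w with hu'
  set v' := v - (inner ℂ w v : ℂ) • w with hv'
  have hiv : (inner ℂ u' v' : ℂ) = inner ℂ u v - inner ℂ u w * inner ℂ w v := by
    simp only [hu', hv', inner_sub_left, inner_sub_right, inner_smul_left, inner_smul_right,
      hww, mul_one, inner_conj_symm]
    ring
  have huu : (inner ℂ u' u' : ℂ) = 1 - (‖(inner ℂ u w : ℂ)‖)^2 := by
    have h1 : (inner ℂ u u : ℂ) = 1 := by
      rw [inner_self_eq_norm_sq_to_K, hu]; norm_num
    simp only [hu', inner_sub_left, inner_sub_right, inner_smul_left, inner_smul_right,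
      hww, mul_one, inner_conj_symm, h1]
    rw [abs_sq_c, inner_conj_symm w u]
    ring
  have hvv : (inner ℂ v' v' : ℂ) = 1 - (‖(inner ℂ w v : ℂ)‖)^2 := by
    have h1 : (inner ℂ v v : ℂ) = 1 := by
      rw [inner_self_eq_norm_sq_to_K, hv]; norm_num
    simp only [hv', inner_sub_left, inner_sub_right, inner_smul_left, inner_smul_right,
      hww, mul_one, inner_conj_symm, h1]
    rw [abs_sq_c, inner_conj_symm v w]
    ring
  have hnu : ‖u'‖ = Real.sqrt (1 - ‖(inner ℂ u w : ℂ)‖^2) := by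
    have h3 : ‖u'‖^2 = 1 - ‖(inner ℂ u w : ℂ)‖^2 := by
      have h4 := inner_self_eq_norm_sq (𝕜 := ℂ) u'
      rw [huu] at h4
      simpa [← Complex.ofReal_pow] using h4.symm
    rw [← h3, Real.sqrt_sq (norm_nonneg _)]
  have hnv : ‖v'‖ = Real.sqrt (1 - ‖(inner ℂ w v : ℂ)‖^2) := by
    have h3 : ‖v'‖^2 = 1 - ‖(inner ℂ w v : ℂ)‖^2 := by
      have h4 := inner_self_eq_norm_sq (𝕜 := ℂ) v'
      rw [hvv] at h4
      simpa [← Complex.ofReal_pow] using h4.symm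
    rw [← h3, Real.sqrt_sq (norm_nonneg _)]
  have hcs : ‖(inner ℂ u' v' : ℂ)‖ ≤ ‖u'‖ * ‖v'‖ := by
    exact norm_inner_le_norm u' v'
  calc ‖(inner ℂ u w : ℂ)‖ * ‖(inner ℂ w v : ℂ)‖
      = ‖((inner ℂ u w : ℂ) * (inner ℂ w v : ℂ))‖ := (norm_mul _ _).symm
    _ ≤ ‖(inner ℂ u v : ℂ)‖ +
        ‖((inner ℂ u v : ℂ) - (inner ℂ u w : ℂ) * (inner ℂ w v : ℂ))‖ := by
        have h5 := norm_add_le (inner ℂ u v : ℂ)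
          ((inner ℂ u w : ℂ) * (inner ℂ w v : ℂ) - (inner ℂ u v : ℂ))
        have h6 : ‖((inner ℂ u w : ℂ) * (inner ℂ w v : ℂ) - (inner ℂ u v : ℂ))‖
            = ‖((inner ℂ u v : ℂ) - (inner ℂ u w : ℂ) * (inner ℂ w v : ℂ))‖ := by
          rw [← neg_sub, norm_neg]
        rw [h6] at h5
        simpa [add_sub_cancel] using h5
    _ ≤ ‖(inner ℂ u v : ℂ)‖ +
        Real.sqrt (1 - ‖(inner ℂ u w : ℂ)‖^2) *
        Real.sqrt (1 - ‖(inner ℂ w v : ℂ)‖^2) := by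
        rw [← hiv, ← hnu, ← hnv]
        exact add_le_add_right hcs _

theorem stmt17 {V : Type*} [NormedAddCommGroup V] [InnerProductSpace ℂ V]
    (u v w : V) (hu : ‖u‖ = 1) (hv : ‖v‖ = 1) (hw : ‖w‖ = 1)
    (k : ℝ) (hk : 2 ≤ k) :
    (1 - ‖(inner ℂ u v : ℂ)‖ ^ k) ^ (1 / k) ≤
      (1 - ‖(inner ℂ u w : ℂ)‖ ^ k) ^ (1 / k) +
      (1 - ‖(inner ℂ w v : ℂ)‖ ^ k) ^ (1 / k) := by
  have hle : ∀ (x y : V), ‖x‖ = 1 → ‖y‖ = 1 → ‖(inner ℂ x y : ℂ)‖ ≤ 1 := by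
    intro x y hx hy
    have := norm_inner_le_norm (𝕜 := ℂ) x y
    rw [hx, hy] at this
    simpa using this
  exact scalar_lemma hk (norm_nonneg _) (hle u w hu hw)
    (norm_nonneg _) (hle w v hw hv) (norm_nonneg _) (hle u v hu hv)
    (inner_triangle u v w hu hv hw)
end

section
/- Let u, v, w be unit vectors in a complex inner product space. Then | |⟨u,v⟩| − |⟨v,w⟩| | ≤ √(1 − |⟨w,u⟩|²); in particular, |⟨u,v⟩| ≤ |⟨v,w⟩| + √(1 − |⟨w,u⟩|²), i.e., with α = arccos|⟨u,v⟩|, β = arccos|⟨v,w⟩|, γ = arccos|⟨w,u⟩|, one has cos α ≤ cos β + sin γ. -/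
open Real

lemma key18 {V : Type*} [NormedAddCommGroup V] [InnerProductSpace ℂ V]
    (x y z : V) (hx : ‖x‖ = 1) (hy : ‖y‖ = 1) (hz : ‖z‖ = 1) :
    ‖(inner ℂ x y : ℂ) - (inner ℂ x z : ℂ) * (inner ℂ z y : ℂ)‖ ≤
      Real.sqrt (1 - ‖(inner ℂ x z : ℂ)‖ ^ 2) *
        Real.sqrt (1 - ‖(inner ℂ z y : ℂ)‖ ^ 2) := by
  set c : ℂ := inner ℂ z x with hc
  set d : ℂ := inner ℂ z y with hd
  set x' := x - c • z with hx'
  set y' := y - d • z with hy'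
  have hxz : (inner ℂ x z : ℂ) = starRingEnd ℂ c := by rw [hc, inner_conj_symm]
  have hyz : (inner ℂ y z : ℂ) = starRingEnd ℂ d := by rw [hd, inner_conj_symm]
  have h1 : (inner ℂ x' y' : ℂ) = (inner ℂ x y : ℂ) - (inner ℂ x z : ℂ) * (inner ℂ z y : ℂ) := by
    rw [hx', hy']
    simp only [inner_sub_left, inner_sub_right, inner_smul_left, inner_smul_right,
      inner_self_eq_norm_sq_to_K, hz, hxz, hyz]
    push_cast
    ring
  have hnx : ‖x'‖ ^ 2 = 1 - ‖(inner ℂ x z : ℂ)‖ ^ 2 := by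
    rw [hx', @norm_sub_sq ℂ, hx, inner_smul_right, hxz, norm_smul, hz]
    simp [Complex.mul_conj', Complex.normSq_eq_norm_sq, ← Complex.ofReal_pow]
    ring
  have hny : ‖y'‖ ^ 2 = 1 - ‖(inner ℂ z y : ℂ)‖ ^ 2 := by
    rw [hy', @norm_sub_sq ℂ, hy, inner_smul_right, hyz, ← hd, norm_smul, hz]
    simp [Complex.mul_conj', Complex.normSq_eq_norm_sq, ← Complex.ofReal_pow]
    ring
  calc ‖(inner ℂ x y : ℂ) - (inner ℂ x z : ℂ) * (inner ℂ z y : ℂ)‖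
      = ‖(inner ℂ x' y' : ℂ)‖ := by rw [h1]
    _ ≤ ‖x'‖ * ‖y'‖ := norm_inner_le_norm x' y'
    _ = Real.sqrt (1 - ‖(inner ℂ x z : ℂ)‖ ^ 2) *
        Real.sqrt (1 - ‖(inner ℂ z y : ℂ)‖ ^ 2) := by
        rw [← hnx, ← hny, Real.sqrt_sq (norm_nonneg _), Real.sqrt_sq (norm_nonneg _)]

lemma key18' {V : Type*} [NormedAddCommGroup V] [InnerProductSpace ℂ V]
    (x y z : V) (hx : ‖x‖ = 1) (hy : ‖y‖ = 1) (hz : ‖z‖ = 1) :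
    ‖(inner ℂ x y : ℂ)‖ ≤
      ‖(inner ℂ x z : ℂ)‖ * ‖(inner ℂ z y : ℂ)‖ +
      Real.sqrt (1 - ‖(inner ℂ x z : ℂ)‖ ^ 2) *
        Real.sqrt (1 - ‖(inner ℂ z y : ℂ)‖ ^ 2) := by
  have h := key18 x y z hx hy hz
  have h2 : ‖(inner ℂ x y : ℂ)‖ - ‖(inner ℂ x z : ℂ) * (inner ℂ z y : ℂ)‖ ≤
      ‖(inner ℂ x y : ℂ) - (inner ℂ x z : ℂ) * (inner ℂ z y : ℂ)‖ := by
    simpa using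
      norm_sub_norm_le ((inner ℂ x y : ℂ)) ((inner ℂ x z : ℂ) * (inner ℂ z y : ℂ))
  have h3 := (sub_le_iff_le_add'.mp (h2.trans h))
  rw [norm_mul] at h3
  linarith

theorem stmt18 {V : Type*} [NormedAddCommGroup V] [InnerProductSpace ℂ V]
    (u v w : V) (hu : ‖u‖ = 1) (hv : ‖v‖ = 1) (hw : ‖w‖ = 1) :
    |‖(inner ℂ u v : ℂ)‖ - ‖(inner ℂ v w : ℂ)‖| ≤
        Real.sqrt (1 - ‖(inner ℂ w u : ℂ)‖ ^ 2) ∧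
      ‖(inner ℂ u v : ℂ)‖ ≤
        ‖(inner ℂ v w : ℂ)‖ + Real.sqrt (1 - ‖(inner ℂ w u : ℂ)‖ ^ 2) ∧
      Real.cos (Real.arccos (‖(inner ℂ u v : ℂ)‖)) ≤
        Real.cos (Real.arccos (‖(inner ℂ v w : ℂ)‖)) +
          Real.sin (Real.arccos (‖(inner ℂ w u : ℂ)‖)) := by
  set a := ‖(inner ℂ u v : ℂ)‖ with ha
  set b := ‖(inner ℂ v w : ℂ)‖ with hb
  set g := ‖(inner ℂ w u : ℂ)‖ with hg
  have ha0 : 0 ≤ a := norm_nonneg _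
  have hb0 : 0 ≤ b := norm_nonneg _
  have hg0 : 0 ≤ g := norm_nonneg _
  have ha1 : a ≤ 1 := by
    have := norm_inner_le_norm (𝕜 := ℂ) u v; rw [hu, hv] at this; simpa using this
  have hb1 : b ≤ 1 := by
    have := norm_inner_le_norm (𝕜 := ℂ) v w; rw [hv, hw] at this; simpa using this
  have hg1 : g ≤ 1 := by
    have := norm_inner_le_norm (𝕜 := ℂ) w u; rw [hw, hu] at this; simpa using this
  have hsg : Real.sqrt (1 - g ^ 2) ≤ 1 := by
    have : Real.sqrt (1 - g ^ 2) ≤ Real.sqrt 1 := Real.sqrt_le_sqrt (by nlinarith)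
    simpa using this
  have huw : ‖(inner ℂ u w : ℂ)‖ = g := by
    rw [← inner_conj_symm u w, Complex.norm_conj]
  have hvu : ‖(inner ℂ v u : ℂ)‖ = a := by
    rw [← inner_conj_symm v u, Complex.norm_conj]
  have hwv : ‖(inner ℂ w v : ℂ)‖ = b := by
    rw [← inner_conj_symm w v, Complex.norm_conj]
  have h1 : a ≤ b + Real.sqrt (1 - g ^ 2) := by
    have hk := key18' u v w hu hv hw
    rw [huw, hwv] at hk
    have hsb : Real.sqrt (1 - b ^ 2) ≤ 1 := by
      have : Real.sqrt (1 - b ^ 2) ≤ Real.sqrt 1 := Real.sqrt_le_sqrt (by nlinarith)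
      simpa using this
    nlinarith [Real.sqrt_nonneg (1 - g^2), Real.sqrt_nonneg (1 - b^2),
      mul_le_one₀ hsg (Real.sqrt_nonneg _) hsb]
  have h2 : b ≤ a + Real.sqrt (1 - g ^ 2) := by
    have hk := key18' v w u hv hw hu
    rw [hvu, huw] at hk
    have hsa : Real.sqrt (1 - a ^ 2) ≤ 1 := by
      have : Real.sqrt (1 - a ^ 2) ≤ Real.sqrt 1 := Real.sqrt_le_sqrt (by nlinarith)
      simpa using this
    nlinarith [Real.sqrt_nonneg (1 - g^2), Real.sqrt_nonneg (1 - a^2),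
      mul_le_one₀ hsa (Real.sqrt_nonneg _) hsg]
  refine ⟨abs_sub_le_iff.mpr ⟨by linarith, by linarith⟩, h1, ?_⟩
  rw [Real.cos_arccos (by linarith) ha1, Real.cos_arccos (by linarith) hb1,
    Real.sin_arccos]
  exact h1
end

section
/- Let u, v, w be unit vectors in a complex inner product space. Then 1 + 2·|⟨u,v⟩|·|⟨v,w⟩|·|⟨w,u⟩| ≥ |⟨u,v⟩|² + |⟨v,w⟩|² + |⟨w,u⟩|². -/
open Real

theorem stmt19 {V : Type*} [NormedAddCommGroup V] [InnerProductSpace ℂ V]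
    (u v w : V) (hu : ‖u‖ = 1) (hv : ‖v‖ = 1) (hw : ‖w‖ = 1) :
    ‖(inner ℂ u v : ℂ)‖ ^ 2 + ‖(inner ℂ v w : ℂ)‖ ^ 2 +
        ‖(inner ℂ w u : ℂ)‖ ^ 2 ≤
      1 + 2 * ‖(inner ℂ u v : ℂ)‖ * ‖(inner ℂ v w : ℂ)‖ *
        ‖(inner ℂ w u : ℂ)‖ := by
  have hvv : (inner ℂ v v : ℂ) = 1 := by
    rw [inner_self_eq_norm_sq_to_K, hv]; norm_num
  set a : ℂ := inner ℂ v u with ha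
  set b : ℂ := inner ℂ v w with hb
  -- norms of projections
  have hnu : ‖u - a • v‖ ^ 2 = 1 - ‖a‖ ^ 2 := by
    have h2 : (inner ℂ u (a • v) : ℂ) = (‖a‖ : ℂ) ^ 2 := by
      rw [inner_smul_right, ← inner_conj_symm u v, ← ha, Complex.mul_conj]
      norm_cast
      simp [Complex.normSq_eq_norm_sq]
    rw [@norm_sub_sq ℂ V _ _ _ u (a • v), h2, norm_smul, hu, hv]
    simp [← Complex.ofReal_pow]
    ring
  have hnw : ‖w - b • v‖ ^ 2 = 1 - ‖b‖ ^ 2 := by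
    have h2 : (inner ℂ w (b • v) : ℂ) = (‖b‖ : ℂ) ^ 2 := by
      rw [inner_smul_right, ← inner_conj_symm w v, ← hb, Complex.mul_conj]
      norm_cast
      simp [Complex.normSq_eq_norm_sq]
    rw [@norm_sub_sq ℂ V _ _ _ w (b • v), h2, norm_smul, hw, hv]
    simp [← Complex.ofReal_pow]
    ring
  have hinner : (inner ℂ (w - b • v) (u - a • v) : ℂ) = (inner ℂ w u : ℂ) - (inner ℂ w v : ℂ) * a := by
    simp [inner_sub_left, inner_sub_right, inner_smul_left, inner_smul_right, hvv,
      ← inner_conj_symm v w, hv, ← ha]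
    ring
  have hCS := norm_inner_le_norm (𝕜 := ℂ) (w - b • v) (u - a • v)
  rw [hinner] at hCS
  have htri := abs_norm_sub_norm_le ((inner ℂ w u : ℂ)) ((inner ℂ w v : ℂ) * a)
  have hwv : ‖(inner ℂ w v : ℂ)‖ = ‖b‖ := by
    rw [← inner_conj_symm w v, ← hb, RCLike.norm_conj]
  have hAB : ‖(inner ℂ w v : ℂ) * a‖ = ‖b‖ * ‖a‖ := by rw [norm_mul, hwv]
  have huv : ‖(inner ℂ u v : ℂ)‖ = ‖a‖ := by
    rw [← inner_conj_symm u v, ← ha, RCLike.norm_conj]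
  -- combine
  have h1 : |‖(inner ℂ w u : ℂ)‖ - ‖b‖ * ‖a‖| ≤ ‖w - b • v‖ * ‖u - a • v‖ := by
    rw [← hAB]
    exact le_trans htri hCS
  have h2 : (‖(inner ℂ w u : ℂ)‖ - ‖b‖ * ‖a‖) ^ 2 ≤ (1 - ‖b‖ ^ 2) * (1 - ‖a‖ ^ 2) := by
    have := mul_self_le_mul_self (abs_nonneg _) h1
    calc (‖(inner ℂ w u : ℂ)‖ - ‖b‖ * ‖a‖) ^ 2 = |‖(inner ℂ w u : ℂ)‖ - ‖b‖ * ‖a‖| ^ 2 := by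
          rw [sq_abs]
      _ ≤ (‖w - b • v‖ * ‖u - a • v‖) ^ 2 := by
          rw [sq, sq]; exact this
      _ = (1 - ‖b‖ ^ 2) * (1 - ‖a‖ ^ 2) := by rw [mul_pow, hnu, hnw]
  have e1 : ‖(inner ℂ u v : ℂ)‖ = ‖a‖ := huv
  have e2 : ‖(inner ℂ v w : ℂ)‖ = ‖b‖ := rfl
  have e3 : ‖(inner ℂ w u : ℂ)‖ = ‖(inner ℂ w u : ℂ)‖ := rfl
  rw [e1, e2, e3]
  nlinarith [norm_nonneg a, norm_nonneg b, norm_nonneg ((inner ℂ w u : ℂ))]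
end
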